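/- arXiv:2307.08021 — 3 statements merged into one kernel-verified Lean document; each statement's English description precedes it below -/
import Mathlib

section
/- Let M ∈ ℕ, Z ⊆ X_1, f ∈ C(X_1,ℝ), and let U_i be open covers of X_i for i=1,…,k. Then P_W^a(T_1, Z, {U_i}_{i=1}^k, f) = (1/M) · P_W^a(T_1^M, Z, {(U_i)_0^{M−1}}_{i=1}^k, S_M f), where on the right-hand side the local average a-weighted pressure is computed for the tower of systems (X_i, T_i^M) with the same factor maps τ_i, with open covers (U_i)_0^{M−1}=⋁_{l=0}^{M−1}T_i^{−l}U_i, and with potential S_M f = Σ_{l=0}^{M−1} f∘T_1^l. -/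
set_option maxHeartbeats 1000000


open MeasureTheory Set Filter Topology
open scoped ENNReal symmDiff

namespace WTP

variable {k : ℕ}

/-- cumulative weight `a 1 + … + a i` (zero-indexed: `a 0 + … + a i`). -/
noncomputable def cw (a : Fin k → ℝ) (i : Fin k) : ℝ := ∑ j ∈ Finset.Iic i, a j

/-- Birkhoff sum `S_n f = ∑_{l<n} f ∘ T^l`. -/
noncomputable def birk {X : Type*} (T : X → X) (f : X → ℝ) (n : ℕ) (x : X) : ℝ :=
  ∑ l ∈ Finset.range n, f (T^[l] x)

/-- a (finite) open cover of a topological space. -/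
def IsOpenCover {X : Type*} [TopologicalSpace X] (𝒰 : Set (Set X)) : Prop :=
  𝒰.Finite ∧ (∀ U ∈ 𝒰, IsOpen U) ∧ ⋃₀ 𝒰 = Set.univ

/-- pullback of a cover along a map. -/
def pullCov {X Y : Type*} (g : X → Y) (𝒰 : Set (Set Y)) : Set (Set X) :=
  (fun U => g ⁻¹' U) '' 𝒰

/-- the quantity `exp(−s·n + (1/a₁)·sup_{x∈A} S_{⌈a₁ n⌉} f(x))`, as an element of `ℝ≥0∞`. -/
noncomputable def pterm {X : Type*} (T1 : X → X) (f : X → ℝ) (a1 s : ℝ) (n : ℕ)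
    (A : Set X) : ℝ≥0∞ :=
  ENNReal.ofReal (Real.exp (-(s * n) + (1 / a1) * sSup (birk T1 f ⌈a1 * (n : ℝ)⌉₊ '' A)))

/-- the weighted Bowen ball `B_n^𝐚(x, ε)`. -/
def wBowen {X : Fin k → Type*} [∀ i, MetricSpace (X i)] {X1 : Type*}
    (T : ∀ i, X i → X i) (τ : ∀ i, X1 → X i) (a : Fin k → ℝ)
    (n : ℕ) (x : X1) (ε : ℝ) : Set X1 :=
  {y | ∀ i : Fin k, ∀ j < ⌈cw a i * (n : ℝ)⌉₊,
      dist ((T i)^[j] (τ i x)) ((T i)^[j] (τ i y)) < ε}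

section Bowen

variable [NeZero k] {X : Fin k → Type*} [∀ i, MetricSpace (X i)] {X1 : Type*}
  [MeasurableSpace X1]

/-- `Λ^{𝐚,s}_{N,ε}(Z,f)`. -/
noncomputable def lamBowenN (T1 : X1 → X1) (T : ∀ i, X i → X i) (τ : ∀ i, X1 → X i)
    (a : Fin k → ℝ) (f : X1 → ℝ) (s ε : ℝ) (N : ℕ) (Z : Set X1) : ℝ≥0∞ :=
  ⨅ (D : Set (ℕ × Set X1)) (_ : D.Countable)
    (_ : ∀ p ∈ D, N ≤ p.1 ∧ MeasurableSet p.2 ∧ ∃ x : X1, p.2 ⊆ wBowen T τ a p.1 x ε)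
    (_ : Z ⊆ ⋃ p ∈ D, p.2),
    ∑' p : D, pterm T1 f (a 0) s p.1.1 p.1.2

/-- `Λ^{𝐚,s}_{ε}(Z,f) = lim_{N→∞} Λ^{𝐚,s}_{N,ε}(Z,f)` (an increasing limit). -/
noncomputable def lamBowen (T1 : X1 → X1) (T : ∀ i, X i → X i) (τ : ∀ i, X1 → X i)
    (a : Fin k → ℝ) (f : X1 → ℝ) (s ε : ℝ) (Z : Set X1) : ℝ≥0∞ :=
  ⨆ N : ℕ, lamBowenN T1 T τ a f s ε N Z

/-- `P^𝐚(T₁, Z, ε, f) = inf {s : Λ^{𝐚,s}_ε(Z,f) = 0}`. -/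
noncomputable def PBowenEps (T1 : X1 → X1) (T : ∀ i, X i → X i) (τ : ∀ i, X1 → X i)
    (a : Fin k → ℝ) (Z : Set X1) (f : X1 → ℝ) (ε : ℝ) : EReal :=
  sInf (Real.toEReal '' {s : ℝ | lamBowen T1 T τ a f s ε Z = 0})

/-- the 𝐚-weighted topological pressure `P^𝐚(T₁, Z, f) = lim_{ε→0} P^𝐚(T₁, Z, ε, f)`
(an increasing limit as `ε` decreases to `0`). -/
noncomputable def PBowen (T1 : X1 → X1) (T : ∀ i, X i → X i) (τ : ∀ i, X1 → X i)
    (a : Fin k → ℝ) (Z : Set X1) (f : X1 → ℝ) : EReal :=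
  ⨆ ε : {e : ℝ // 0 < e}, PBowenEps T1 T τ a Z f ε.1

/-- `W^{𝐚,s}_{N,ε}(Z,f)`. -/
noncomputable def wBowenWN (T1 : X1 → X1) (T : ∀ i, X i → X i) (τ : ∀ i, X1 → X i)
    (a : Fin k → ℝ) (f : X1 → ℝ) (s ε : ℝ) (N : ℕ) (Z : Set X1) : ℝ≥0∞ :=
  ⨅ (D : Set (ℕ × Set X1 × ℝ≥0∞)) (_ : D.Countable)
    (_ : ∀ p ∈ D, N ≤ p.1 ∧ MeasurableSet p.2.1 ∧ 0 < p.2.2 ∧ p.2.2 ≠ ⊤ ∧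
        ∃ x : X1, p.2.1 ⊆ wBowen T τ a p.1 x ε)
    (_ : ∀ z ∈ Z, 1 ≤ ∑' p : D, (p.1.2.1).indicator (fun _ => p.1.2.2) z),
    ∑' p : D, p.1.2.2 * pterm T1 f (a 0) s p.1.1 p.1.2.1

/-- `W^{𝐚,s}_{ε}(Z,f)`. -/
noncomputable def wBowenW (T1 : X1 → X1) (T : ∀ i, X i → X i) (τ : ∀ i, X1 → X i)
    (a : Fin k → ℝ) (f : X1 → ℝ) (s ε : ℝ) (Z : Set X1) : ℝ≥0∞ :=
  ⨆ N : ℕ, wBowenWN T1 T τ a f s ε N Z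

/-- `P_W^𝐚(T₁, Z, ε, f)`. -/
noncomputable def PWBowenEps (T1 : X1 → X1) (T : ∀ i, X i → X i) (τ : ∀ i, X1 → X i)
    (a : Fin k → ℝ) (Z : Set X1) (f : X1 → ℝ) (ε : ℝ) : EReal :=
  sInf (Real.toEReal '' {s : ℝ | wBowenW T1 T τ a f s ε Z = 0})

/-- the average 𝐚-weighted topological pressure `P_W^𝐚(T₁, Z, f)`. -/
noncomputable def PWBowen (T1 : X1 → X1) (T : ∀ i, X i → X i) (τ : ∀ i, X1 → X i)
    (a : Fin k → ℝ) (Z : Set X1) (f : X1 → ℝ) : EReal :=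
  ⨆ ε : {e : ℝ // 0 < e}, PWBowenEps T1 T τ a Z f ε.1

end Bowen

section Local

variable [NeZero k] {X1 : Type*} [MeasurableSpace X1]

/-- the cover `⋁_{i=1}^k (τ_{i-1}^{-1} 𝒰_i)_0^{⌈(a_1+…+a_i) n⌉ - 1}` on the first space, where
`𝒱 i` is the pulled back cover `τ_{i-1}^{-1} 𝒰_i`. -/
def jointFiber (T1 : X1 → X1) (a : Fin k → ℝ) (𝒱 : Fin k → Set (Set X1)) (n : ℕ) :
    Set (Set X1) :=
  {A | ∃ V : Fin k → ℕ → Set X1,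
      (∀ i, ∀ l < ⌈cw a i * (n : ℝ)⌉₊, V i l ∈ 𝒱 i) ∧
      A = ⋂ i : Fin k, ⋂ l ∈ Finset.range ⌈cw a i * (n : ℝ)⌉₊, (T1^[l]) ⁻¹' V i l}

/-- `Λ^{𝐚,s}_{N,{𝒰_i}}(Z,f)`. -/
noncomputable def lamLocN (T1 : X1 → X1) (a : Fin k → ℝ) (𝒱 : Fin k → Set (Set X1))
    (f : X1 → ℝ) (s : ℝ) (N : ℕ) (Z : Set X1) : ℝ≥0∞ :=
  ⨅ (D : Set (ℕ × Set X1)) (_ : D.Countable)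
    (_ : ∀ p ∈ D, N ≤ p.1 ∧ MeasurableSet p.2 ∧ ∃ A ∈ jointFiber T1 a 𝒱 p.1, p.2 ⊆ A)
    (_ : Z ⊆ ⋃ p ∈ D, p.2),
    ∑' p : D, pterm T1 f (a 0) s p.1.1 p.1.2

/-- `Λ^{𝐚,s}_{{𝒰_i}}(Z,f)`. -/
noncomputable def lamLoc (T1 : X1 → X1) (a : Fin k → ℝ) (𝒱 : Fin k → Set (Set X1))
    (f : X1 → ℝ) (s : ℝ) (Z : Set X1) : ℝ≥0∞ :=
  ⨆ N : ℕ, lamLocN T1 a 𝒱 f s N Z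

/-- the local 𝐚-weighted topological pressure `P^𝐚(T₁, Z, {𝒰_i}, f)`, expressed through the
pulled-back covers `𝒱 i = τ_{i-1}^{-1} 𝒰_i`. -/
noncomputable def PLoc (T1 : X1 → X1) (a : Fin k → ℝ) (𝒱 : Fin k → Set (Set X1))
    (Z : Set X1) (f : X1 → ℝ) : EReal :=
  sInf (Real.toEReal '' {s : ℝ | lamLoc T1 a 𝒱 f s Z = 0})

/-- `W^{𝐚,s}_{N,{𝒰_i}}(Z,f)`. -/
noncomputable def wLocN (T1 : X1 → X1) (a : Fin k → ℝ) (𝒱 : Fin k → Set (Set X1))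
    (f : X1 → ℝ) (s : ℝ) (N : ℕ) (Z : Set X1) : ℝ≥0∞ :=
  ⨅ (D : Set (ℕ × Set X1 × ℝ≥0∞)) (_ : D.Countable)
    (_ : ∀ p ∈ D, N ≤ p.1 ∧ MeasurableSet p.2.1 ∧ 0 < p.2.2 ∧ p.2.2 ≠ ⊤ ∧
        ∃ A ∈ jointFiber T1 a 𝒱 p.1, p.2.1 ⊆ A)
    (_ : ∀ z ∈ Z, 1 ≤ ∑' p : D, (p.1.2.1).indicator (fun _ => p.1.2.2) z),
    ∑' p : D, p.1.2.2 * pterm T1 f (a 0) s p.1.1 p.1.2.1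

/-- `W^{𝐚,s}_{{𝒰_i}}(Z,f)`. -/
noncomputable def wLoc (T1 : X1 → X1) (a : Fin k → ℝ) (𝒱 : Fin k → Set (Set X1))
    (f : X1 → ℝ) (s : ℝ) (Z : Set X1) : ℝ≥0∞ :=
  ⨆ N : ℕ, wLocN T1 a 𝒱 f s N Z

/-- the local average 𝐚-weighted topological pressure `P_W^𝐚(T₁, Z, {𝒰_i}, f)`. -/
noncomputable def PWLoc (T1 : X1 → X1) (a : Fin k → ℝ) (𝒱 : Fin k → Set (Set X1))
    (Z : Set X1) (f : X1 → ℝ) : EReal :=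
  sInf (Real.toEReal '' {s : ℝ | wLoc T1 a 𝒱 f s Z = 0})

end Local

/-- iterated join `(𝒰)_0^{n-1} = ⋁_{l=0}^{n-1} T^{-l} 𝒰` of a cover. -/
def covJoinT {X : Type*} (T : X → X) (𝒰 : Set (Set X)) (n : ℕ) : Set (Set X) :=
  {A | ∃ u : ℕ → Set X, (∀ l < n, u l ∈ 𝒰) ∧
      A = ⋂ l ∈ Finset.range n, (T^[l]) ⁻¹' u l}

/-- the join `⋁_{j=i}^{k} 𝒱 j` of covers of a single space (in applications
`𝒱 j = τ_{j-1}^{-1} 𝒰_j`). -/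
def joinFrom {X1 : Type*} (𝒱 : Fin k → Set (Set X1)) (i : Fin k) : Set (Set X1) :=
  {A | ∃ V : Fin k → Set X1, (∀ j, i ≤ j → V j ∈ 𝒱 j) ∧ A = ⋂ j ∈ Finset.Ici i, V j}

/-- a finite measurable partition (indexed). -/
def IsPart {X : Type*} [MeasurableSpace X] {ι : Type*} (β : ι → Set X) : Prop :=
  (∀ i, MeasurableSet (β i)) ∧ (∀ i j, i ≠ j → Disjoint (β i) (β j)) ∧ ⋃ i, β i = Set.univ

/-- the static entropy `H_μ(β) = -∑ μ(B) log μ(B)` of a finite (indexed) partition. -/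
noncomputable def entH {X : Type*} [MeasurableSpace X] {ι : Type*} [Fintype ι]
    (μ : Measure X) (β : ι → Set X) : ℝ :=
  ∑ i, Real.negMulLog (μ (β i)).toReal

/-- the dynamical join `⋁_{l=0}^{n-1} T^{-l} β` of a partition. -/
def dynJoin {X : Type*} (T : X → X) {ι : Type*} (β : ι → Set X) (n : ℕ) :
    (Fin n → ι) → Set X :=
  fun c => ⋂ l : Fin n, (T^[(l : ℕ)]) ⁻¹' β (c l)

/-- the measure-theoretic entropy `h_μ(T, β) = lim_n (1/n) H_μ(⋁_{l<n} T^{-l}β)` of `T`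
relative to a finite partition. -/
noncomputable def hPart {X : Type*} [MeasurableSpace X] {ι : Type*} [Fintype ι]
    (μ : Measure X) (T : X → X) (β : ι → Set X) : EReal :=
  Filter.liminf (fun n : ℕ => ((entH μ (dynJoin T β n) / n : ℝ) : EReal)) Filter.atTop

/-- the Kolmogorov–Sinai entropy `h_μ(T)`. -/
noncomputable def hKS {X : Type*} [MeasurableSpace X] (μ : Measure X) (T : X → X) : EReal :=
  ⨆ p : (Σ m : ℕ, {β : Fin m → Set X // IsPart β}), hPart μ T p.2.1

/-- `H_μ(𝒰) = inf {H_μ(β) : β a finite measurable partition refining 𝒰}`. -/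
noncomputable def covH {X : Type*} [MeasurableSpace X] (μ : Measure X)
    (𝒰 : Set (Set X)) : ℝ :=
  sInf {h : ℝ | ∃ (m : ℕ) (β : Fin m → Set X), IsPart β ∧
      (∀ i, ∃ U ∈ 𝒰, β i ⊆ U) ∧ h = entH μ β}

/-- the local measure-theoretic entropy `h_μ(T, 𝒰) = lim_n (1/n) H_μ((𝒰)_0^{n-1})` of `T`
relative to an open cover. -/
noncomputable def hCov {X : Type*} [MeasurableSpace X] (μ : Measure X) (T : X → X)
    (𝒰 : Set (Set X)) : EReal :=
  Filter.liminf (fun n : ℕ => ((covH μ (covJoinT T 𝒰 n) / n : ℝ) : EReal)) Filter.atTop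

/-- `h⁺_μ(T,𝒰) = inf {h_μ(T,β) : β a finite measurable partition refining 𝒰}`. -/
noncomputable def hCovPlus {X : Type*} [MeasurableSpace X] (μ : Measure X) (T : X → X)
    (𝒰 : Set (Set X)) : EReal :=
  ⨅ p : (Σ m : ℕ, {β : Fin m → Set X // IsPart β ∧ ∀ i, ∃ U ∈ 𝒰, β i ⊆ U}),
    hPart μ T p.2.1

/-- the join `⋁_{j=i}^{k} γ j` of partitions of a single space (in applications
`γ j = τ_{j-1}^{-1} α_j`). -/
def partJoinFrom {X1 : Type*} {ι : Fin k → Type*} (γ : ∀ j, ι j → Set X1) (i : Fin k) :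
    (∀ j : {j : Fin k // i ≤ j}, ι j) → Set X1 :=
  fun c => ⋂ j : {j : Fin k // i ≤ j}, γ j (c j)

/-- the partition `⋁_{i=1}^k (γ_i)_0^{⌈(a_1+…+a_i)N⌉-1}` on the first space, where
`γ i = τ_{i-1}^{-1} α_i`. -/
def bigPartJoin {X1 : Type*} (T1 : X1 → X1) (a : Fin k → ℝ) {ι : Fin k → Type*}
    (γ : ∀ i, ι i → Set X1) (N : ℕ) :
    (∀ i : Fin k, Fin ⌈cw a i * (N : ℝ)⌉₊ → ι i) → Set X1 :=
  fun c => ⋂ i : Fin k, ⋂ l : Fin ⌈cw a i * (N : ℝ)⌉₊, (T1^[(l : ℕ)]) ⁻¹' γ i (c i l)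

/-- conditional entropy `H_μ(γ|β) = H_μ(γ ∨ β) - H_μ(β)`. -/
noncomputable def condEnt {X : Type*} [MeasurableSpace X] {ι κ : Type*} [Fintype ι] [Fintype κ]
    (μ : Measure X) (γ : ι → Set X) (β : κ → Set X) : ℝ :=
  entH μ (fun p : ι × κ => γ p.1 ∩ β p.2) - entH μ β

/-- the oscillation `w_f(⋁_{i=1}^k τ_{i-1}^{-1} 𝒰_i)` of `f` on the joined cover, where
`𝒱 i = τ_{i-1}^{-1} 𝒰_i`. -/
noncomputable def wfJoin {X1 : Type*} (f : X1 → ℝ) (𝒱 : Fin k → Set (Set X1)) : ℝ :=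
  sSup {d : ℝ | ∃ V : Fin k → Set X1, (∀ i, V i ∈ 𝒱 i) ∧
      ∃ x ∈ ⋂ i, V i, ∃ y ∈ ⋂ i, V i, d = |f x - f y|}

/-- the topological support of a measure. -/
def msupp {X : Type*} [TopologicalSpace X] [MeasurableSpace X] (μ : Measure X) : Set X :=
  {x | ∀ U : Set X, IsOpen U → x ∈ U → 0 < μ U}

section PowAux
variable {X1 : Type*}

lemma birk_add (T : X1 → X1) (f : X1 → ℝ) (p q : ℕ) (x : X1) :
    birk T f (p + q) x = birk T f p x + birk T f q (T^[p] x) := by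
  simp only [birk, Finset.sum_range_add]
  congr 1
  refine Finset.sum_congr rfl fun l _ => ?_
  rw [add_comm p l, Function.iterate_add_apply]

lemma birk_iterate (T : X1 → X1) (f : X1 → ℝ) (M q : ℕ) (x : X1) :
    birk (T^[M]) (birk T f M) q x = birk T f (M * q) x := by
  induction q with
  | zero => simp [birk]
  | succ q ih =>
    have h1 : birk (T^[M]) (birk T f M) (q + 1) x
        = birk (T^[M]) (birk T f M) q x + birk T f M ((T^[M])^[q] x) := by
      simp only [birk, Finset.sum_range_succ]
    rw [h1, ih, ← Function.iterate_mul, ← birk_add, Nat.mul_succ]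

lemma abs_birk_le {f : X1 → ℝ} {B : ℝ} (hB : ∀ x, |f x| ≤ B) (T : X1 → X1) (n : ℕ) (x : X1) :
    |birk T f n x| ≤ n * B := by
  calc |birk T f n x| ≤ ∑ l ∈ Finset.range n, |f (T^[l] x)| := Finset.abs_sum_le_sum_abs _ _
    _ ≤ ∑ _l ∈ Finset.range n, B := Finset.sum_le_sum fun l _ => hB _
    _ = n * B := by simp [mul_comm]

lemma birk_le_birk_add {f : X1 → ℝ} {B : ℝ} (hB : ∀ x, |f x| ≤ B) (T : X1 → X1)
    (q q' : ℕ) (x : X1) :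
    birk T f q' x ≤ birk T f q x + |(q' : ℝ) - (q : ℝ)| * B := by
  rcases le_total q q' with h | h
  · obtain ⟨d, rfl⟩ := Nat.exists_eq_add_of_le h
    rw [birk_add]
    have h1 := (abs_le.mp (abs_birk_le hB T d (T^[q] x))).2
    have h2 : |((q + d : ℕ) : ℝ) - (q : ℝ)| = (d : ℝ) := by
      push_cast
      rw [add_sub_cancel_left, abs_of_nonneg (by positivity)]
    rw [h2]; linarith
  · obtain ⟨d, rfl⟩ := Nat.exists_eq_add_of_le h
    rw [birk_add]
    have h1 := (abs_le.mp (abs_birk_le hB T d (T^[q'] x))).1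
    have h2 : |((q' : ℕ) : ℝ) - ((q' + d : ℕ) : ℝ)| = (d : ℝ) := by
      push_cast
      rw [show ((q' : ℝ) - (q' + d)) = -(d : ℝ) by ring, abs_neg, abs_of_nonneg (by positivity)]
    rw [h2]
    have hB0 : 0 ≤ B := le_trans (abs_nonneg _) (hB x)
    have : -((d : ℝ) * B) ≤ birk T f d (T^[q'] x) := by linarith
    linarith

lemma sSup_birk_le {A' A : Set X1} (hne : A'.Nonempty) (hsub : A' ⊆ A) {g h : X1 → ℝ}
    {C D : ℝ} (hb : ∀ x ∈ A, h x ≤ D) (hgh : ∀ x ∈ A', g x ≤ h x + C) :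
    sSup (g '' A') ≤ sSup (h '' A) + C := by
  refine csSup_le (hne.image g) ?_
  rintro y ⟨x, hx, rfl⟩
  have hle : h x ≤ sSup (h '' A) :=
    le_csSup ⟨D, by rintro y ⟨x', hx', rfl⟩; exact hb x' hx'⟩ ⟨x, hsub hx, rfl⟩
  linarith [hgh x hx]

lemma sSup_birk_le' {A : Set X1} {g h : X1 → ℝ} {C D : ℝ} (hC : 0 ≤ C)
    (hb : ∀ x ∈ A, h x ≤ D) (hgh : ∀ x ∈ A, g x ≤ h x + C) :
    sSup (g '' A) ≤ sSup (h '' A) + C := by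
  rcases A.eq_empty_or_nonempty with rfl | hne
  · simpa [Real.sSup_empty] using hC
  · exact sSup_birk_le hne Subset.rfl hb hgh

lemma neg_le_sSup_birk {A : Set X1} (hne : A.Nonempty) {g : X1 → ℝ} {D : ℝ}
    (hb : ∀ x ∈ A, |g x| ≤ D) : -D ≤ sSup (g '' A) := by
  obtain ⟨x, hx⟩ := hne
  have hle : g x ≤ sSup (g '' A) :=
    le_csSup ⟨D, by rintro y ⟨x', hx', rfl⟩; exact (abs_le.mp (hb x' hx')).2⟩ ⟨x, hx, rfl⟩
  linarith [(abs_le.mp (hb x hx)).1]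

lemma pterm_le_pterm_mul {T T' : X1 → X1} {f g : X1 → ℝ} {a1 s s' c : ℝ} {n n' : ℕ}
    {A A' : Set X1}
    (h : -(s * n) + (1 / a1) * sSup (birk T f ⌈a1 * (n : ℝ)⌉₊ '' A) ≤
        c + (-(s' * n') + (1 / a1) * sSup (birk T' g ⌈a1 * (n' : ℝ)⌉₊ '' A'))) :
    pterm T f a1 s n A ≤ ENNReal.ofReal (Real.exp c) * pterm T' g a1 s' n' A' := by
  rw [pterm, pterm, ← ENNReal.ofReal_mul (Real.exp_pos c).le, ← Real.exp_add]
  exact ENNReal.ofReal_le_ofReal (Real.exp_le_exp.mpr (by linarith))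

lemma pterm_pos {T : X1 → X1} {f : X1 → ℝ} {a1 s : ℝ} {n : ℕ} {A : Set X1} :
    0 < pterm T f a1 s n A := ENNReal.ofReal_pos.mpr (Real.exp_pos _)

lemma pterm_ne_top {T : X1 → X1} {f : X1 → ℝ} {a1 s : ℝ} {n : ℕ} {A : Set X1} :
    pterm T f a1 s n A ≠ ⊤ := ENNReal.ofReal_ne_top

end PowAux

lemma pterm_mul_le {T : X1 → X1} {f : X1 → ℝ} {B a1 : ℝ} (hB : ∀ x, |f x| ≤ B)
    (hB0 : 0 ≤ B) (ha1 : 0 < a1) {M : ℕ} (hM : 0 < M) (s : ℝ) (n : ℕ) (A : Set X1) :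
    pterm T f a1 s (M * n) A ≤ ENNReal.ofReal (Real.exp ((M * B) / a1)) *
      pterm (T^[M]) (birk T f M) a1 (M * s) n A := by
  have hfun : birk (T^[M]) (birk T f M) ⌈a1 * (n : ℝ)⌉₊ = birk T f (M * ⌈a1 * (n : ℝ)⌉₊) :=
    funext (birk_iterate T f M _)
  apply pterm_le_pterm_mul
  rw [hfun]
  set q1 := ⌈a1 * ((M * n : ℕ) : ℝ)⌉₊ with hq1
  set q2 := M * ⌈a1 * (n : ℝ)⌉₊ with hq2
  have hX : a1 * ((M * n : ℕ) : ℝ) = (M : ℝ) * (a1 * n) := by push_cast; ring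
  have hc1 : a1 * ((M * n : ℕ) : ℝ) ≤ q1 := Nat.le_ceil _
  have hc2 : (q1 : ℝ) < a1 * ((M * n : ℕ) : ℝ) + 1 := by
    rw [hq1]; exact Nat.ceil_lt_add_one (by rw [hX]; positivity)
  have hc3 : a1 * (n : ℝ) ≤ (⌈a1 * (n : ℝ)⌉₊ : ℝ) := Nat.le_ceil _
  have hc4 : (⌈a1 * (n : ℝ)⌉₊ : ℝ) < a1 * n + 1 := Nat.ceil_lt_add_one (by positivity)
  have hq2' : (q2 : ℝ) = (M : ℝ) * (⌈a1 * (n : ℝ)⌉₊ : ℝ) := by rw [hq2]; push_cast; ring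
  have hM1 : (1 : ℝ) ≤ M := by exact_mod_cast hM
  have k1 : (M : ℝ) * (a1 * n) ≤ (M : ℝ) * (⌈a1 * (n : ℝ)⌉₊ : ℝ) :=
    mul_le_mul_of_nonneg_left hc3 (by positivity)
  have k2 : (M : ℝ) * (⌈a1 * (n : ℝ)⌉₊ : ℝ) ≤ (M : ℝ) * (a1 * n) + M := by nlinarith
  have habs : |(q1 : ℝ) - (q2 : ℝ)| ≤ M := by
    rw [abs_le]; constructor <;> [linarith; linarith]
  have hsup : sSup (birk T f q1 '' A) ≤ sSup (birk T f q2 '' A) + M * B := by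
    refine sSup_birk_le' (by positivity) (fun x _ => (abs_le.mp (abs_birk_le hB T q2 x)).2)
      (fun x _ => ?_)
    have h5 : |(q1 : ℝ) - q2| * B ≤ (M : ℝ) * B := mul_le_mul_of_nonneg_right habs hB0
    linarith [birk_le_birk_add hB T q2 q1 x]
  have h1a : (0 : ℝ) ≤ 1 / a1 := by positivity
  have h6 := mul_le_mul_of_nonneg_left hsup h1a
  have h7 : (1 / a1) * (sSup (birk T f q2 '' A) + M * B)
      = (1 / a1) * sSup (birk T f q2 '' A) + (M * B) / a1 := by
    field_simp
  have hcast : s * ((M * n : ℕ) : ℝ) = (M * s) * (n : ℝ) := by push_cast; ring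
  linarith

lemma pterm_pow_le {T : X1 → X1} {f : X1 → ℝ} {B a1 : ℝ} (hB : ∀ x, |f x| ≤ B)
    (hB0 : 0 ≤ B) (ha1 : 0 < a1) {M : ℕ} (hM : 0 < M) (s : ℝ) (n : ℕ)
    {A A' : Set X1} (hne : A'.Nonempty) (hsub : A' ⊆ A) :
    pterm (T^[M]) (birk T f M) a1 (M * s) (n / M + 1) A' ≤
      ENNReal.ofReal (Real.exp (M * |s| + ((a1 + 1) * M + 1) * B / a1)) *
        pterm T f a1 s n A := by
  set m := n / M + 1 with hmdef
  have hfun : birk (T^[M]) (birk T f M) ⌈a1 * (m : ℝ)⌉₊ = birk T f (M * ⌈a1 * (m : ℝ)⌉₊) :=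
    funext (birk_iterate T f M _)
  apply pterm_le_pterm_mul
  rw [hfun]
  -- nat facts
  have hdm := Nat.div_add_mod n M
  have hmod := Nat.mod_lt n hM
  have hmm : M * m = M * (n / M) + M := by rw [hmdef]; ring
  have hn1 : n < M * m := by omega
  have hn2 : M * m ≤ n + M := by omega
  have hn1' : (n : ℝ) < (M : ℝ) * m := by exact_mod_cast hn1
  have hn2' : (M : ℝ) * m ≤ (n : ℝ) + M := by exact_mod_cast hn2
  set q' := M * ⌈a1 * (m : ℝ)⌉₊ with hq'def
  set q := ⌈a1 * (n : ℝ)⌉₊ with hqdef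
  have hM0 : (0 : ℝ) < M := by exact_mod_cast hM
  have hM1 : (1 : ℝ) ≤ M := by exact_mod_cast hM
  have hc1 : a1 * (m : ℝ) ≤ (⌈a1 * (m : ℝ)⌉₊ : ℝ) := Nat.le_ceil _
  have hc2 : (⌈a1 * (m : ℝ)⌉₊ : ℝ) < a1 * m + 1 := Nat.ceil_lt_add_one (by positivity)
  have hc3 : a1 * (n : ℝ) ≤ (q : ℝ) := Nat.le_ceil _
  have hc4 : (q : ℝ) < a1 * n + 1 := Nat.ceil_lt_add_one (by positivity)
  have hq'c : (q' : ℝ) = (M : ℝ) * (⌈a1 * (m : ℝ)⌉₊ : ℝ) := by rw [hq'def]; push_cast; ring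
  have k1 : (M : ℝ) * (a1 * m) ≤ (q' : ℝ) := by
    rw [hq'c]; exact mul_le_mul_of_nonneg_left hc1 (by positivity)
  have k2 : (q' : ℝ) < (M : ℝ) * (a1 * m) + M := by
    rw [hq'c]; nlinarith
  have k3 : a1 * ((M : ℝ) * m) ≤ a1 * ((n : ℝ) + M) := mul_le_mul_of_nonneg_left hn2' ha1.le
  have k4 : a1 * (n : ℝ) ≤ a1 * ((M : ℝ) * m) := mul_le_mul_of_nonneg_left hn1'.le ha1.le
  have habs : |(q' : ℝ) - (q : ℝ)| ≤ (a1 + 1) * M + 1 := by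
    rw [abs_le]
    constructor
    · nlinarith
    · nlinarith
  -- sup comparison
  have hsup : sSup (birk T f q' '' A') ≤ sSup (birk T f q '' A) + ((a1 + 1) * M + 1) * B := by
    refine sSup_birk_le hne hsub (fun x _ => (abs_le.mp (abs_birk_le hB T q x)).2)
      (fun x _ => ?_)
    have h5 : |(q' : ℝ) - q| * B ≤ ((a1 + 1) * M + 1) * B := mul_le_mul_of_nonneg_right habs hB0
    linarith [birk_le_birk_add hB T q q' x]
  have h1a : (0 : ℝ) ≤ 1 / a1 := by positivity
  have h6 := mul_le_mul_of_nonneg_left hsup h1a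
  have h7 : (1 / a1) * (sSup (birk T f q '' A) + ((a1 + 1) * M + 1) * B)
      = (1 / a1) * sSup (birk T f q '' A) + ((a1 + 1) * M + 1) * B / a1 := by
    field_simp
  -- exponent comparison
  have hexp : -((M * s) * (m : ℝ)) ≤ -(s * n) + M * |s| := by
    have habs2 : |s * ((M : ℝ) * m - n)| ≤ |s| * M := by
      rw [abs_mul]
      refine mul_le_mul_of_nonneg_left ?_ (abs_nonneg s)
      rw [abs_of_nonneg (by linarith)]
      linarith
    have h8 := (abs_le.mp habs2).1
    have h9 : s * ((M : ℝ) * m - n) = (M : ℝ) * s * m - s * n := by ring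
    linarith
  linarith

lemma le_pterm {T : X1 → X1} {f : X1 → ℝ} {B a1 : ℝ} (hB : ∀ x, |f x| ≤ B)
    (ha1 : 0 < a1) (s : ℝ) {n L : ℕ} (hnL : n ≤ L) {A : Set X1} (hne : A.Nonempty) :
    ENNReal.ofReal (Real.exp (-(|s| * ((L : ℕ) : ℝ)) - (a1 * ((L : ℕ) : ℝ) + 1) * B / a1))
      ≤ pterm T f a1 s n A := by
  have hB0 : 0 ≤ B := le_trans (abs_nonneg _) (hB hne.choose)
  rw [pterm]
  apply ENNReal.ofReal_le_ofReal
  apply Real.exp_le_exp.mpr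
  set q := ⌈a1 * (n : ℝ)⌉₊ with hq
  have hc4 : (q : ℝ) < a1 * n + 1 := Nat.ceil_lt_add_one (by positivity)
  have hnL' : (n : ℝ) ≤ L := by exact_mod_cast hnL
  have hsup : -((q : ℝ) * B) ≤ sSup (birk T f q '' A) :=
    neg_le_sSup_birk hne (fun x _ => abs_birk_le hB T q x)
  have hqB : (q : ℝ) * B ≤ (a1 * L + 1) * B := by
    refine mul_le_mul_of_nonneg_right ?_ hB0
    nlinarith
  have h1a : (0 : ℝ) ≤ 1 / a1 := by positivity
  have h6 : (1 / a1) * (-((a1 * (L:ℝ) + 1) * B)) ≤ (1 / a1) * sSup (birk T f q '' A) := by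
    refine mul_le_mul_of_nonneg_left ?_ h1a
    linarith
  have h7 : (1 / a1) * (-((a1 * (L:ℝ) + 1) * B)) = -((a1 * (L:ℝ) + 1) * B / a1) := by
    field_simp
  have hsn : -(|s| * (L : ℝ)) ≤ -(s * n) := by
    have : s * n ≤ |s| * L := by
      calc s * n ≤ |s * n| := le_abs_self _
        _ = |s| * |(n : ℝ)| := abs_mul _ _
        _ ≤ |s| * L := by
            refine mul_le_mul_of_nonneg_left ?_ (abs_nonneg s)
            rw [abs_of_nonneg (by positivity)]; exact hnL'
    linarith
  linarith

lemma le_mul_iInf3 {ι : Type*} {P Q R : ι → Prop} {c : ι → ℝ≥0∞} {L C : ℝ≥0∞}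
    (hC0 : C ≠ 0) (hCt : C ≠ ⊤)
    (H : ∀ i, P i → Q i → R i → c i ≠ ⊤ → L ≤ C * c i) :
    L ≤ C * ⨅ (i) (_ : P i) (_ : Q i) (_ : R i), c i := by
  set R0 := ⨅ (i) (_ : P i) (_ : Q i) (_ : R i), c i with hR0
  rcases eq_or_ne R0 ⊤ with h | h
  · rw [h, ENNReal.mul_top hC0]; exact le_top
  · refine ENNReal.le_of_forall_pos_le_add fun ε hε _ => ?_
    have hδ0 : (ε : ℝ≥0∞) / C ≠ 0 := by
      simp only [ne_eq, ENNReal.div_eq_zero_iff, not_or]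
      exact ⟨by exact_mod_cast hε.ne', hCt⟩
    have hδt : (ε : ℝ≥0∞) / C ≠ ⊤ := by
      rw [Ne, ENNReal.div_eq_top]
      push_neg
      exact ⟨fun _ => hC0, fun h' => absurd h' ENNReal.coe_ne_top⟩
    have hlt : R0 < R0 + ε / C := ENNReal.lt_add_right h hδ0
    have hlt' : (⨅ (i) (_ : P i) (_ : Q i) (_ : R i), c i) < R0 + ε / C :=
      lt_of_eq_of_lt hR0.symm hlt
    simp only [iInf_lt_iff] at hlt'
    obtain ⟨i, hP, hQ, hR, hci⟩ := hlt'
    have htop : R0 + ε / C < ⊤ :=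
      ENNReal.add_lt_top.mpr ⟨h.lt_top, hδt.lt_top⟩
    have hcit : c i ≠ ⊤ := (hci.trans htop).ne
    calc L ≤ C * c i := H i hP hQ hR hcit
      _ ≤ C * (R0 + ε / C) := mul_le_mul_right hci.le _
      _ = C * R0 + C * (ε / C) := by rw [mul_add]
      _ ≤ C * R0 + ε := add_le_add le_rfl ENNReal.mul_div_le

lemma ceil_mul_le {c : ℝ} (hc : 0 ≤ c) (M n : ℕ) :
    ⌈c * ((M * n : ℕ) : ℝ)⌉₊ ≤ M * ⌈c * (n : ℝ)⌉₊ := by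
  rw [Nat.ceil_le]
  push_cast
  calc c * ((M : ℝ) * n) = (M : ℝ) * (c * n) := by ring
    _ ≤ (M : ℝ) * (⌈c * (n : ℝ)⌉₊ : ℝ) :=
        mul_le_mul_of_nonneg_left (Nat.le_ceil _) (by positivity)

lemma ceil_gap {c : ℝ} (hc : 0 ≤ c) {M : ℕ} (hM : 0 < M) (n : ℕ) :
    M * ⌈c * ((n / M + 1 : ℕ) : ℝ)⌉₊ ≤ ⌈c * (n : ℝ)⌉₊ + M * (⌈c⌉₊ + 1) := by
  have hdm := Nat.div_add_mod n M
  have hmod := Nat.mod_lt n hM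
  have hmm0 : M * (n / M + 1) = M * (n / M) + M := by ring
  have hmm : M * (n / M + 1) ≤ n + M := by omega
  set r := ((n / M + 1 : ℕ) : ℝ) with hrdef
  have hM0 : (0 : ℝ) < M := by exact_mod_cast hM
  have hmm' : (M : ℝ) * r ≤ (n : ℝ) + M := by
    rw [hrdef]; exact_mod_cast hmm
  have hceil : (⌈c * r⌉₊ : ℝ) < c * r + 1 := Nat.ceil_lt_add_one (by positivity)
  have h8 : c * (n : ℝ) ≤ (⌈c * (n : ℝ)⌉₊ : ℝ) := Nat.le_ceil _
  have h9 : c * (M : ℝ) ≤ (⌈c⌉₊ : ℝ) * M :=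
    mul_le_mul_of_nonneg_right (Nat.le_ceil _) hM0.le
  have t1 : (M : ℝ) * (⌈c * r⌉₊ : ℝ) < (M : ℝ) * (c * r) + M := by
    have := mul_lt_mul_of_pos_left hceil hM0
    linarith [this]
  have t2 : c * ((M : ℝ) * r) ≤ c * ((n : ℝ) + M) := mul_le_mul_of_nonneg_left hmm' hc
  have t3 : (M : ℝ) * (c * r) = c * ((M : ℝ) * r) := by ring
  have t4 : c * ((n : ℝ) + M) = c * n + c * M := by ring
  have key : (M : ℝ) * (⌈c * r⌉₊ : ℝ) < (⌈c * (n : ℝ)⌉₊ : ℝ) + (⌈c⌉₊ : ℝ) * M + M + 1 := by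
    linarith
  have keyn : M * ⌈c * r⌉₊ < ⌈c * (n : ℝ)⌉₊ + M * (⌈c⌉₊ + 1) + 1 := by
    have hcast : ((M * ⌈c * r⌉₊ : ℕ) : ℝ) < ((⌈c * (n : ℝ)⌉₊ + M * (⌈c⌉₊ + 1) + 1 : ℕ) : ℝ) := by
      push_cast
      linarith
    exact_mod_cast hcast
  omega



section PowAux2
open Function
variable {X1 : Type*}

lemma jointFiber_pow_subset {k : ℕ} [NeZero k] (T1 : X1 → X1)
    (a : Fin k → ℝ) (hcw : ∀ i, 0 ≤ cw a i) (𝒱 : Fin k → Set (Set X1))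
    {M : ℕ} (hM : 0 < M) {n : ℕ} {A : Set X1}
    (hA : A ∈ jointFiber (T1^[M]) a (fun i => covJoinT T1 (𝒱 i) M) n) :
    ∃ A' ∈ jointFiber T1 a 𝒱 (M * n), A ⊆ A' := by
  classical
  obtain ⟨V, hV, rfl⟩ := hA
  have hu : ∀ (i : Fin k) (l : ℕ), l < ⌈cw a i * (n : ℝ)⌉₊ → ∃ u : ℕ → Set X1,
      (∀ r < M, u r ∈ 𝒱 i) ∧ V i l = ⋂ r ∈ Finset.range M, (T1^[r]) ⁻¹' u r :=
    fun i l hl => hV i l hl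
  choose u hu1 hu2 using hu
  set W : Fin k → ℕ → Set X1 := fun i j =>
    if h : j / M < ⌈cw a i * (n : ℝ)⌉₊ then u i (j / M) h (j % M) else Set.univ with hW
  refine ⟨⋂ i : Fin k, ⋂ j ∈ Finset.range ⌈cw a i * ((M * n : ℕ) : ℝ)⌉₊, (T1^[j]) ⁻¹' W i j,
    ⟨W, fun i j hj => ?_, rfl⟩, ?_⟩
  · have hlt : j < M * ⌈cw a i * (n : ℝ)⌉₊ := hj.trans_le (ceil_mul_le (hcw i) M n)
    have hdiv : j / M < ⌈cw a i * (n : ℝ)⌉₊ :=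
      (Nat.div_lt_iff_lt_mul hM).mpr (by rwa [Nat.mul_comm] at hlt)
    rw [hW]
    simp only [hdiv, dif_pos]
    exact hu1 i (j / M) hdiv (j % M) (Nat.mod_lt j hM)
  · intro x hx
    simp only [Set.mem_iInter, Finset.mem_range] at hx ⊢
    intro i j hj
    have hlt : j < M * ⌈cw a i * (n : ℝ)⌉₊ := hj.trans_le (ceil_mul_le (hcw i) M n)
    have hdiv : j / M < ⌈cw a i * (n : ℝ)⌉₊ := (Nat.div_lt_iff_lt_mul hM).mpr (by rwa [Nat.mul_comm] at hlt)
    have hVm := hx i (j / M) hdiv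
    rw [hu2 i (j / M) hdiv] at hVm
    simp only [Set.mem_iInter, Finset.mem_range, Set.mem_preimage] at hVm
    have hr := hVm (j % M) (Nat.mod_lt j hM)
    rw [hW]
    simp only [hdiv, dif_pos, Set.mem_preimage]
    have hpt : T1^[j] x = T1^[j % M] ((T1^[M])^[j / M] x) := by
      rw [← Function.iterate_mul, ← Function.iterate_add_apply,
        show j % M + M * (j / M) = j from by have := Nat.div_add_mod j M; omega]
    rw [hpt]
    exact hr

lemma pullCov_covJoinT {X2 : Type*} {τ : X1 → X2} {T1 : X1 → X1} {T2 : X2 → X2}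
    (hsc : ∀ x, τ (T1 x) = T2 (τ x)) (𝒰 : Set (Set X2)) (M : ℕ) :
    pullCov τ (covJoinT T2 𝒰 M) = covJoinT T1 (pullCov τ 𝒰) M := by
  classical
  have hcomp : ∀ l : ℕ, ∀ S : Set X2, (T1^[l]) ⁻¹' (τ ⁻¹' S) = τ ⁻¹' ((T2^[l]) ⁻¹' S) := by
    intro l S
    have h : τ ∘ T1^[l] = T2^[l] ∘ τ := (Function.Semiconj.iterate_right hsc l).comp_eq
    rw [← Set.preimage_comp, h, Set.preimage_comp]
  ext A
  constructor
  · rintro ⟨Bs, ⟨w, hw, rfl⟩, rfl⟩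
    refine ⟨fun l => τ ⁻¹' (w l), fun l hl => ⟨w l, hw l hl, rfl⟩, ?_⟩
    simp only [Set.preimage_iInter, hcomp]
  · rintro ⟨V, hV, rfl⟩
    have hch : ∀ l : ℕ, ∃ w : Set X2, l < M → (w ∈ 𝒰 ∧ V l = τ ⁻¹' w) := by
      intro l
      by_cases hl : l < M
      · obtain ⟨w, hw, hVl⟩ := hV l hl
        exact ⟨w, fun _ => ⟨hw, hVl.symm⟩⟩
      · exact ⟨∅, fun h => absurd h hl⟩
    choose w hw using hch
    refine ⟨⋂ l ∈ Finset.range M, (T2^[l]) ⁻¹' w l, ⟨w, fun l hl => (hw l hl).1, rfl⟩, ?_⟩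
    ext x
    simp only [Set.mem_iInter, Set.mem_preimage, Finset.mem_range]
    refine forall_congr' fun l => imp_congr_right fun hl => ?_
    rw [(hw l hl).2]
    have h := (Function.Semiconj.iterate_right hsc l) x
    simp only [Set.mem_preimage, h]

end PowAux2


section LemmaA
variable {k : ℕ} [NeZero k] {X1 : Type*} [MeasurableSpace X1]

lemma wLocN_mul_le (T1 : X1 → X1) (a : Fin k → ℝ)
    (hcw : ∀ i, 0 ≤ cw a i) (𝒱 : Fin k → Set (Set X1))
    {f : X1 → ℝ} {B : ℝ} (hB : ∀ x, |f x| ≤ B) (hB0 : 0 ≤ B) (ha1 : 0 < a 0)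
    {M : ℕ} (hM : 0 < M) (s : ℝ) (N : ℕ) (Z : Set X1) :
    wLocN T1 a 𝒱 f s N Z ≤ ENNReal.ofReal (Real.exp ((M * B) / (a 0))) *
      wLocN (T1^[M]) a (fun i => covJoinT T1 (𝒱 i) M) (birk T1 f M) (M * s) N Z := by
  have hC0 : ENNReal.ofReal (Real.exp ((M * B) / (a 0))) ≠ 0 := by
    simp [ENNReal.ofReal_eq_zero, not_le, Real.exp_pos]
  have hCt : ENNReal.ofReal (Real.exp ((M * B) / (a 0))) ≠ ⊤ := ENNReal.ofReal_ne_top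
  unfold wLocN
  apply le_mul_iInf3 hC0 hCt
  intro D hcnt hadm hcov _
  set φ : ℕ × Set X1 × ℝ≥0∞ → ℕ × Set X1 × ℝ≥0∞ := fun p => (M * p.1, p.2) with hφ
  have hinj : Function.Injective φ := by
    intro p q h
    rw [hφ] at h
    simp only [Prod.mk.injEq] at h
    obtain ⟨h1, h2⟩ := h
    exact Prod.ext (Nat.eq_of_mul_eq_mul_left hM h1) h2
  refine le_trans (iInf_le_of_le (φ '' D) (iInf_le_of_le (hcnt.image φ)
    (iInf_le_of_le ?_ (iInf_le_of_le ?_ le_rfl)))) ?_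
  · -- admissibility
    rintro q ⟨p, hp, rfl⟩
    obtain ⟨hN, hmeas, hpos, htop, A, hA, hsub⟩ := hadm p hp
    obtain ⟨A', hA', hAA'⟩ := jointFiber_pow_subset T1 a hcw 𝒱 hM hA
    exact ⟨le_trans hN (Nat.le_mul_of_pos_left _ hM), hmeas, hpos, htop, A', hA',
      hsub.trans hAA'⟩
  · -- covering
    intro z hz
    have h1 := hcov z hz
    have h2 := tsum_image (s := D) (g := φ)
      (fun y : ℕ × Set X1 × ℝ≥0∞ => y.2.1.indicator (fun _ => y.2.2) z) hinj.injOn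
    exact h1.trans_eq h2.symm
  · -- cost
    have h2 := tsum_image (s := D) (g := φ)
      (fun y : ℕ × Set X1 × ℝ≥0∞ => y.2.2 * pterm T1 f (a 0) s y.1 y.2.1) hinj.injOn
    calc ∑' q : (φ '' D : Set _), q.1.2.2 * pterm T1 f (a 0) s q.1.1 q.1.2.1
        = ∑' p : D, p.1.2.2 * pterm T1 f (a 0) s (M * p.1.1) p.1.2.1 := h2
      _ ≤ ∑' p : D, p.1.2.2 * (ENNReal.ofReal (Real.exp ((M * B) / (a 0))) *
            pterm (T1^[M]) (birk T1 f M) (a 0) (M * s) p.1.1 p.1.2.1) := by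
          refine ENNReal.tsum_le_tsum fun p => ?_
          exact mul_le_mul_right (pterm_mul_le hB hB0 ha1 hM s p.1.1 p.1.2.1) _
      _ = ENNReal.ofReal (Real.exp ((M * B) / (a 0))) *
            ∑' p : D, p.1.2.2 * pterm (T1^[M]) (birk T1 f M) (a 0) (M * s) p.1.1 p.1.2.1 := by
          rw [← ENNReal.tsum_mul_left]
          refine tsum_congr fun p => ?_
          ring

end LemmaA


section LemmaB
variable {k : ℕ} [NeZero k] {X1 : Type*} [MeasurableSpace X1]

lemma wLocN_pow_le [Nonempty X1] {T1 : X1 → X1} (hT1 : Measurable T1)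
    {a : Fin k → ℝ} (ha1 : 0 < a 0) (hcw : ∀ i, 0 ≤ cw a i)
    {𝒱 : Fin k → Set (Set X1)} (hVfin : ∀ i, (𝒱 i).Finite)
    (hVcov : ∀ i, ⋃₀ 𝒱 i = Set.univ) (hVmeas : ∀ i, ∀ V ∈ 𝒱 i, MeasurableSet V)
    {f : X1 → ℝ} {B : ℝ} (hB : ∀ x, |f x| ≤ B)
    {M : ℕ} (hM : 0 < M) (s : ℝ) (N' : ℕ) (Z : Set X1) :
    wLocN (T1^[M]) a (fun i => covJoinT T1 (𝒱 i) M) (birk T1 f M) (M * s) N' Z ≤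
      ((Nat.card (∀ i : Fin k, Fin (M * (⌈cw a i⌉₊ + 1)) → (𝒱 i)) : ℝ≥0∞) *
          ENNReal.ofReal (Real.exp (M * |s| + ((a 0 + 1) * M + 1) * B / (a 0)))) *
        wLocN T1 a 𝒱 f s (M * N') Z := by
  classical
  haveI hfinV : ∀ i : Fin k, Finite (𝒱 i) := fun i => (hVfin i).to_subtype
  have hB0 : 0 ≤ B := le_trans (abs_nonneg _) (hB (Classical.ofNonempty))
  have hVne : ∀ i : Fin k, ∀ y : X1, ∃ V ∈ 𝒱 i, y ∈ V := by
    intro i y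
    have h := hVcov i
    have hy : y ∈ ⋃₀ 𝒱 i := h ▸ Set.mem_univ y
    simpa [Set.mem_sUnion] using hy
  haveI hΦne : Nonempty (∀ i : Fin k, Fin (M * (⌈cw a i⌉₊ + 1)) → (𝒱 i)) :=
    ⟨fun i _ => ⟨(hVne i Classical.ofNonempty).choose,
      ((hVne i Classical.ofNonempty).choose_spec).1⟩⟩
  set Φ := (∀ i : Fin k, Fin (M * (⌈cw a i⌉₊ + 1)) → (𝒱 i)) with hΦdef
  set CΔ := ENNReal.ofReal (Real.exp (M * |s| + ((a 0 + 1) * M + 1) * B / (a 0))) with hCΔ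
  have hCΔ0 : CΔ ≠ 0 := by simp [hCΔ, ENNReal.ofReal_eq_zero, not_le, Real.exp_pos]
  have hK0 : (Nat.card Φ : ℝ≥0∞) * CΔ ≠ 0 := by
    refine mul_ne_zero ?_ hCΔ0
    have h : 0 < Nat.card Φ := Nat.card_pos
    exact_mod_cast h.ne'
  have hKt : (Nat.card Φ : ℝ≥0∞) * CΔ ≠ ⊤ :=
    ENNReal.mul_ne_top (ENNReal.natCast_ne_top _) ENNReal.ofReal_ne_top
  unfold wLocN
  apply le_mul_iInf3 hK0 hKt
  intro D hcnt hadm hcov hfinD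
  set Ext : (ℕ × Set X1 × ℝ≥0∞) → Φ → Set X1 := fun p σ =>
    p.2.1 ∩ ⋂ (i : Fin k), ⋂ (t : Fin (M * (⌈cw a i⌉₊ + 1))),
      (T1^[⌈cw a i * (p.1 : ℝ)⌉₊ + (t : ℕ)]) ⁻¹' ((σ i t : Set X1)) with hExtdef
  have hExtsub : ∀ p σ, Ext p σ ⊆ p.2.1 := fun p σ => Set.inter_subset_left
  set mm : ℕ → ℕ := fun n => n / M + 1 with hmdef
  have hmn : ∀ n : ℕ, n < M * mm n := by
    intro n
    have h1 := Nat.div_add_mod n M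
    have h2 := Nat.mod_lt n hM
    have h3 : M * mm n = M * (n / M) + M := by simp only [hmdef]; ring
    omega
  set wt : ℕ → Set X1 → ℝ≥0∞ := fun n B0 =>
    ∑' p : D, (if mm (p : ℕ × Set X1 × ℝ≥0∞).1 = n ∧ ∃ σ : Φ, Ext p σ = B0
      then (p : ℕ × Set X1 × ℝ≥0∞).2.2 else 0) with hwtdef
  set D' : Set (ℕ × Set X1 × ℝ≥0∞) :=
    {q | (∃ p ∈ D, ∃ σ : Φ, q.1 = mm p.1 ∧ q.2.1 = Ext p σ) ∧ q.2.1.Nonempty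
        ∧ q.2.2 = wt q.1 q.2.1} with hD'def
  set δ : ℕ → ℝ≥0∞ := fun n => ENNReal.ofReal (Real.exp (-(|s| * ((M * n : ℕ) : ℝ))
      - ((a 0) * ((M * n : ℕ) : ℝ) + 1) * B / (a 0))) with hδdef
  have hδ0 : ∀ n, δ n ≠ 0 := fun n => by
    simp [hδdef, ENNReal.ofReal_eq_zero, not_le, Real.exp_pos]
  have hδle : ∀ (p : ℕ × Set X1 × ℝ≥0∞), p ∈ D → p.2.1.Nonempty → ∀ n, mm p.1 = n →
      δ n ≤ pterm T1 f (a 0) s p.1 p.2.1 := by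
    intro p hp hne n hmp
    have hple : p.1 ≤ M * n := by
      subst hmp
      exact (hmn p.1).le
    exact hδdef ▸ le_pterm hB ha1 s hple hne
  have hwt_le : ∀ n B0, B0.Nonempty →
      wt n B0 * δ n ≤ ∑' p : D, (p : ℕ × Set X1 × ℝ≥0∞).2.2 *
        pterm T1 f (a 0) s (p : ℕ × Set X1 × ℝ≥0∞).1 (p : ℕ × Set X1 × ℝ≥0∞).2.1 := by
    intro n B0 hne
    rw [hwtdef]
    simp only []
    rw [← ENNReal.tsum_mul_right]
    refine ENNReal.tsum_le_tsum fun p => ?_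
    by_cases hsrc : mm (p : ℕ × Set X1 × ℝ≥0∞).1 = n ∧ ∃ σ : Φ, Ext p σ = B0
    · rw [if_pos hsrc]
      obtain ⟨hm1, σ, hσ⟩ := hsrc
      have hne' : (p : ℕ × Set X1 × ℝ≥0∞).2.1.Nonempty := by
        obtain ⟨x, hx⟩ := hne
        rw [← hσ] at hx
        exact ⟨x, hExtsub _ σ hx⟩
      exact mul_le_mul_right (hδle p p.2 hne' n hm1) _
    · rw [if_neg hsrc, zero_mul]
      exact zero_le
  have hwt_ne_top : ∀ n B0, B0.Nonempty → wt n B0 ≠ ⊤ := by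
    intro n B0 hne htop
    have h1 := hwt_le n B0 hne
    rw [htop, ENNReal.top_mul (hδ0 n)] at h1
    exact hfinD (top_le_iff.mp h1)
  have hwt_posD : ∀ (p : ℕ × Set X1 × ℝ≥0∞) (hp : p ∈ D) (σ : Φ),
      0 < wt (mm p.1) (Ext p σ) := by
    intro p hp σ
    have h1 : (if mm ((⟨p, hp⟩ : D) : ℕ × Set X1 × ℝ≥0∞).1 = mm p.1 ∧
        ∃ σ' : Φ, Ext ((⟨p, hp⟩ : D) : ℕ × Set X1 × ℝ≥0∞) σ' = Ext p σ
        then ((⟨p, hp⟩ : D) : ℕ × Set X1 × ℝ≥0∞).2.2 else 0) ≤ wt (mm p.1) (Ext p σ) :=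
      ENNReal.le_tsum (⟨p, hp⟩ : D)
    rw [if_pos ⟨rfl, σ, rfl⟩] at h1
    exact lt_of_lt_of_le (hadm p hp).2.2.1 h1
  have hjf : ∀ (p : ℕ × Set X1 × ℝ≥0∞), p ∈ D → ∀ σ : Φ,
      ∃ A' ∈ jointFiber (T1^[M]) a (fun i => covJoinT T1 (𝒱 i) M) (mm p.1),
        Ext p σ ⊆ A' := by
    intro p hp σ
    obtain ⟨_, _, _, _, A, hA, hsubA⟩ := hadm p hp
    obtain ⟨Vo, hVo, hAeq⟩ := hA
    have hG0 : ∀ i : Fin k, 0 < M * (⌈cw a i⌉₊ + 1) := fun i => Nat.mul_pos hM (Nat.succ_pos _)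
    have hgap : ∀ i : Fin k, M * ⌈cw a i * ((mm p.1 : ℕ) : ℝ)⌉₊ ≤
        ⌈cw a i * (p.1 : ℝ)⌉₊ + M * (⌈cw a i⌉₊ + 1) := by
      intro i
      have h := ceil_gap (hcw i) hM p.1
      simpa [hmdef] using h
    set w : Fin k → ℕ → Set X1 := fun i j =>
      if j < ⌈cw a i * (p.1 : ℝ)⌉₊ then Vo i j
      else ((σ i ⟨(j - ⌈cw a i * (p.1 : ℝ)⌉₊) % (M * (⌈cw a i⌉₊ + 1)),
        Nat.mod_lt _ (hG0 i)⟩ : Set X1)) with hwdef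
    refine ⟨⋂ i : Fin k, ⋂ l ∈ Finset.range ⌈cw a i * ((mm p.1 : ℕ) : ℝ)⌉₊,
        ((T1^[M])^[l]) ⁻¹' (⋂ r ∈ Finset.range M, (T1^[r]) ⁻¹' w i (M * l + r)),
      ⟨fun i l => ⋂ r ∈ Finset.range M, (T1^[r]) ⁻¹' w i (M * l + r),
        fun i l hl => ⟨fun r => w i (M * l + r), fun r hr => ?_, rfl⟩, rfl⟩, ?_⟩
    · by_cases hc : (M * l + r) < ⌈cw a i * (p.1 : ℝ)⌉₊
      · rw [hwdef]
        simp only [hc, if_pos]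
        exact hVo i _ hc
      · rw [hwdef]
        simp only [hc, if_neg, if_false]
        exact (σ i _).2
    · intro x hx
      have hx1 : x ∈ p.2.1 := hx.1
      have hxA : x ∈ A := hsubA hx1
      rw [hAeq] at hxA
      simp only [Set.mem_iInter, Finset.mem_range, Set.mem_preimage] at hxA ⊢
      intro i l hl r hr
      have hiter : T1^[r] ((T1^[M])^[l] x) = T1^[M * l + r] x := by
        rw [← Function.iterate_mul, ← Function.iterate_add_apply, add_comm r (M * l)]
      rw [hiter]
      by_cases hc : (M * l + r) < ⌈cw a i * (p.1 : ℝ)⌉₊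
      · rw [hwdef]
        simp only [hc, if_pos]
        exact hxA i _ hc
      · have hjlt : M * l + r < M * ⌈cw a i * ((mm p.1 : ℕ) : ℝ)⌉₊ := by
          have e1 : M * (l + 1) = M * l + M := by ring
          have e2 : M * (l + 1) ≤ M * ⌈cw a i * ((mm p.1 : ℕ) : ℝ)⌉₊ :=
            Nat.mul_le_mul_left _ hl
          omega
        have htlt : M * l + r - ⌈cw a i * (p.1 : ℝ)⌉₊ < M * (⌈cw a i⌉₊ + 1) := by
          have h := hgap i
          omega
        rw [hwdef]
        simp only [hc, if_neg, if_false]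
        have hx2 := hx.2
        simp only [Set.mem_iInter, Set.mem_preimage] at hx2
        have hmem := hx2 i ⟨M * l + r - ⌈cw a i * (p.1 : ℝ)⌉₊, htlt⟩
        have hadd : ⌈cw a i * (p.1 : ℝ)⌉₊ + (M * l + r - ⌈cw a i * (p.1 : ℝ)⌉₊)
            = M * l + r := by omega
        rw [hadd] at hmem
        have hfineq : (⟨(M * l + r - ⌈cw a i * (p.1 : ℝ)⌉₊) % (M * (⌈cw a i⌉₊ + 1)),
            Nat.mod_lt _ (hG0 i)⟩ : Fin (M * (⌈cw a i⌉₊ + 1)))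
            = ⟨M * l + r - ⌈cw a i * (p.1 : ℝ)⌉₊, htlt⟩ :=
          Fin.ext (Nat.mod_eq_of_lt htlt)
        rw [hfineq]
        exact hmem
  have hcntD' : D'.Countable := by
    have hsub : D' ⊆ (fun pσ : (ℕ × Set X1 × ℝ≥0∞) × Φ =>
        (mm pσ.1.1, Ext pσ.1 pσ.2, wt (mm pσ.1.1) (Ext pσ.1 pσ.2))) ''
          (D ×ˢ (Set.univ : Set Φ)) := by
      rintro ⟨q1, q2, q3⟩ ⟨⟨p, hp, σ, hq1, hq2⟩, hne, hq3⟩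
      refine ⟨(p, σ), ⟨hp, Set.mem_univ _⟩, ?_⟩
      simp only [] at hq1 hq2 hq3 ⊢
      rw [← hq1, ← hq2]
      rw [hq3]
    exact Set.Countable.mono hsub (Set.Countable.image (hcnt.prod Set.countable_univ) _)
  have hadm' : ∀ q ∈ D', N' ≤ q.1 ∧ MeasurableSet q.2.1 ∧ 0 < q.2.2 ∧ q.2.2 ≠ ⊤ ∧
      ∃ A ∈ jointFiber (T1^[M]) a (fun i => covJoinT T1 (𝒱 i) M) q.1, q.2.1 ⊆ A := by
    rintro ⟨q1, q2, q3⟩ ⟨⟨p, hp, σ, hq1, hq2⟩, hne, hq3⟩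
    simp only [] at hq1 hq2 hq3 hne ⊢
    obtain ⟨hNp, hmeasp, _, _, _⟩ := hadm p hp
    refine ⟨?_, ?_, ?_, ?_, ?_⟩
    · rw [hq1]
      have h1 : N' ≤ p.1 / M := (Nat.le_div_iff_mul_le hM).mpr (by rw [Nat.mul_comm]; exact hNp)
      simp only [hmdef]
      omega
    · rw [hq2, hExtdef]
      refine MeasurableSet.inter hmeasp ?_
      refine MeasurableSet.iInter fun i => MeasurableSet.iInter fun t => ?_
      exact (hT1.iterate _) (hVmeas i _ (σ i t).2)
    · rw [hq3, hq1, hq2]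
      exact hwt_posD p hp σ
    · rw [hq3]
      exact hwt_ne_top _ _ hne
    · rw [hq1, hq2]
      exact hjf p hp σ
  have hcov' : ∀ z ∈ Z, (1 : ℝ≥0∞) ≤ ∑' q : D', ((q : ℕ × Set X1 × ℝ≥0∞).2.1).indicator
      (fun _ => (q : ℕ × Set X1 × ℝ≥0∞).2.2) z := by
    intro z hz
    refine le_trans (hcov z hz) ?_
    have hrhs : ∀ q : D', ((q : ℕ × Set X1 × ℝ≥0∞).2.1).indicator
        (fun _ => (q : ℕ × Set X1 × ℝ≥0∞).2.2) z
        = ∑' p : D, ((q : ℕ × Set X1 × ℝ≥0∞).2.1).indicator (fun _ =>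
            if mm (p : ℕ × Set X1 × ℝ≥0∞).1 = (q : ℕ × Set X1 × ℝ≥0∞).1 ∧
              ∃ σ : Φ, Ext p σ = (q : ℕ × Set X1 × ℝ≥0∞).2.1
            then (p : ℕ × Set X1 × ℝ≥0∞).2.2 else 0) z := by
      intro q
      obtain ⟨_, _, hq3⟩ := q.2
      by_cases hzq : z ∈ (q : ℕ × Set X1 × ℝ≥0∞).2.1
      · simp only [Set.indicator_of_mem hzq]
        rw [hq3, hwtdef]
      · simp only [Set.indicator_of_notMem hzq]
        exact tsum_zero.symm
    calc ∑' p : D, ((p : ℕ × Set X1 × ℝ≥0∞).2.1).indicator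
            (fun _ => (p : ℕ × Set X1 × ℝ≥0∞).2.2) z
        ≤ ∑' p : D, ∑' q : D', ((q : ℕ × Set X1 × ℝ≥0∞).2.1).indicator (fun _ =>
            if mm (p : ℕ × Set X1 × ℝ≥0∞).1 = (q : ℕ × Set X1 × ℝ≥0∞).1 ∧
              ∃ σ : Φ, Ext p σ = (q : ℕ × Set X1 × ℝ≥0∞).2.1
            then (p : ℕ × Set X1 × ℝ≥0∞).2.2 else 0) z := by
          refine ENNReal.tsum_le_tsum fun p => ?_
          by_cases hzp : z ∈ (p : ℕ × Set X1 × ℝ≥0∞).2.1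
          · have hσz : ∃ σ : Φ, z ∈ Ext (p : ℕ × Set X1 × ℝ≥0∞) σ := by
              refine ⟨fun i t =>
                ⟨(hVne i (T1^[⌈cw a i * ((p : ℕ × Set X1 × ℝ≥0∞).1 : ℝ)⌉₊ + (t : ℕ)] z)).choose,
                 ((hVne i _).choose_spec).1⟩, ?_⟩
              rw [hExtdef]
              refine ⟨hzp, ?_⟩
              simp only [Set.mem_iInter, Set.mem_preimage]
              intro i t
              exact ((hVne i _).choose_spec).2
            obtain ⟨σz, hσz⟩ := hσz
            have hq0 : (mm (p : ℕ × Set X1 × ℝ≥0∞).1, Ext (p : ℕ × Set X1 × ℝ≥0∞) σz,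
                wt (mm (p : ℕ × Set X1 × ℝ≥0∞).1) (Ext (p : ℕ × Set X1 × ℝ≥0∞) σz)) ∈ D' :=
              ⟨⟨(p : ℕ × Set X1 × ℝ≥0∞), p.2, σz, rfl, rfl⟩, ⟨z, hσz⟩, rfl⟩
            refine le_trans ?_ (ENNReal.le_tsum (⟨_, hq0⟩ : D'))
            rw [Set.indicator_of_mem hzp]
            rw [Set.indicator_of_mem hσz, if_pos ⟨rfl, σz, rfl⟩]
          · rw [Set.indicator_of_notMem hzp]
            exact zero_le
      _ = ∑' q : D', ∑' p : D, ((q : ℕ × Set X1 × ℝ≥0∞).2.1).indicator (fun _ =>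
            if mm (p : ℕ × Set X1 × ℝ≥0∞).1 = (q : ℕ × Set X1 × ℝ≥0∞).1 ∧
              ∃ σ : Φ, Ext p σ = (q : ℕ × Set X1 × ℝ≥0∞).2.1
            then (p : ℕ × Set X1 × ℝ≥0∞).2.2 else 0) z := ENNReal.tsum_comm
      _ = ∑' q : D', ((q : ℕ × Set X1 × ℝ≥0∞).2.1).indicator
            (fun _ => (q : ℕ × Set X1 × ℝ≥0∞).2.2) z :=
          tsum_congr fun q => (hrhs q).symm
  refine le_trans (iInf_le_of_le D' (iInf_le_of_le hcntD'
    (iInf_le_of_le hadm' (iInf_le_of_le hcov' le_rfl)))) ?_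
  -- cost bound
  calc ∑' q : D', (q : ℕ × Set X1 × ℝ≥0∞).2.2 * pterm (T1^[M]) (birk T1 f M) (a 0) (M * s)
          (q : ℕ × Set X1 × ℝ≥0∞).1 (q : ℕ × Set X1 × ℝ≥0∞).2.1
      = ∑' q : D', ∑' p : D, (if mm (p : ℕ × Set X1 × ℝ≥0∞).1 = (q : ℕ × Set X1 × ℝ≥0∞).1 ∧
            ∃ σ : Φ, Ext p σ = (q : ℕ × Set X1 × ℝ≥0∞).2.1
          then (p : ℕ × Set X1 × ℝ≥0∞).2.2 else 0) *
          pterm (T1^[M]) (birk T1 f M) (a 0) (M * s)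
            (q : ℕ × Set X1 × ℝ≥0∞).1 (q : ℕ × Set X1 × ℝ≥0∞).2.1 := by
        refine tsum_congr fun q => ?_
        obtain ⟨_, _, hq3⟩ := q.2
        rw [hq3, hwtdef, ← ENNReal.tsum_mul_right]
    _ = ∑' p : D, ∑' q : D', (if mm (p : ℕ × Set X1 × ℝ≥0∞).1 = (q : ℕ × Set X1 × ℝ≥0∞).1 ∧
            ∃ σ : Φ, Ext p σ = (q : ℕ × Set X1 × ℝ≥0∞).2.1
          then (p : ℕ × Set X1 × ℝ≥0∞).2.2 else 0) *
          pterm (T1^[M]) (birk T1 f M) (a 0) (M * s)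
            (q : ℕ × Set X1 × ℝ≥0∞).1 (q : ℕ × Set X1 × ℝ≥0∞).2.1 := ENNReal.tsum_comm
    _ ≤ ∑' p : D, (Nat.card Φ : ℝ≥0∞) * ((p : ℕ × Set X1 × ℝ≥0∞).2.2 *
          (CΔ * pterm T1 f (a 0) s (p : ℕ × Set X1 × ℝ≥0∞).1 (p : ℕ × Set X1 × ℝ≥0∞).2.1)) := by
        refine ENNReal.tsum_le_tsum fun p => ?_
        set β := (p : ℕ × Set X1 × ℝ≥0∞).2.2 *
          (CΔ * pterm T1 f (a 0) s (p : ℕ × Set X1 × ℝ≥0∞).1 (p : ℕ × Set X1 × ℝ≥0∞).2.1)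
          with hβ
        have hterm : ∀ q : D', (if mm (p : ℕ × Set X1 × ℝ≥0∞).1 = (q : ℕ × Set X1 × ℝ≥0∞).1 ∧
              ∃ σ : Φ, Ext p σ = (q : ℕ × Set X1 × ℝ≥0∞).2.1
            then (p : ℕ × Set X1 × ℝ≥0∞).2.2 else 0) *
            pterm (T1^[M]) (birk T1 f M) (a 0) (M * s)
              (q : ℕ × Set X1 × ℝ≥0∞).1 (q : ℕ × Set X1 × ℝ≥0∞).2.1
            ≤ ∑' σ : Φ, (if (q : ℕ × Set X1 × ℝ≥0∞) =
                (mm (p : ℕ × Set X1 × ℝ≥0∞).1, Ext p σ,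
                  wt (mm (p : ℕ × Set X1 × ℝ≥0∞).1) (Ext p σ)) then β else 0) := by
          intro q
          by_cases hsrc : mm (p : ℕ × Set X1 × ℝ≥0∞).1 = (q : ℕ × Set X1 × ℝ≥0∞).1 ∧
              ∃ σ : Φ, Ext p σ = (q : ℕ × Set X1 × ℝ≥0∞).2.1
          · obtain ⟨hm1, σ, hσ⟩ := hsrc
            obtain ⟨_, hneq, hq3⟩ := q.2
            have hqF : (q : ℕ × Set X1 × ℝ≥0∞) =
                (mm (p : ℕ × Set X1 × ℝ≥0∞).1, Ext p σ,
                  wt (mm (p : ℕ × Set X1 × ℝ≥0∞).1) (Ext p σ)) := by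
              have e1 : (q : ℕ × Set X1 × ℝ≥0∞).1 = mm (p : ℕ × Set X1 × ℝ≥0∞).1 := hm1.symm
              have e2 : (q : ℕ × Set X1 × ℝ≥0∞).2.1 = Ext p σ := hσ.symm
              have e3 : (q : ℕ × Set X1 × ℝ≥0∞).2.2 =
                  wt (mm (p : ℕ × Set X1 × ℝ≥0∞).1) (Ext p σ) := by
                rw [hq3, e1, e2]
              exact Prod.ext e1 (Prod.ext e2 e3)
            have hneE : (Ext p σ).Nonempty := hσ ▸ hneq
            have hle : pterm (T1^[M]) (birk T1 f M) (a 0) (M * s)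
                (q : ℕ × Set X1 × ℝ≥0∞).1 (q : ℕ × Set X1 × ℝ≥0∞).2.1
                ≤ CΔ * pterm T1 f (a 0) s (p : ℕ × Set X1 × ℝ≥0∞).1
                    (p : ℕ × Set X1 × ℝ≥0∞).2.1 := by
              rw [← hm1, ← hσ]
              have h := pterm_pow_le (T := T1) hB hB0 ha1 hM s (p : ℕ × Set X1 × ℝ≥0∞).1
                hneE (hExtsub _ σ)
              rw [hCΔ]
              simpa [hmdef] using h
            calc (if _ then (p : ℕ × Set X1 × ℝ≥0∞).2.2 else 0) *
                  pterm (T1^[M]) (birk T1 f M) (a 0) (M * s)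
                    (q : ℕ × Set X1 × ℝ≥0∞).1 (q : ℕ × Set X1 × ℝ≥0∞).2.1
                = (p : ℕ × Set X1 × ℝ≥0∞).2.2 *
                  pterm (T1^[M]) (birk T1 f M) (a 0) (M * s)
                    (q : ℕ × Set X1 × ℝ≥0∞).1 (q : ℕ × Set X1 × ℝ≥0∞).2.1 := by
                  rw [if_pos ⟨hm1, σ, hσ⟩]
              _ ≤ β := by rw [hβ]; exact mul_le_mul_right hle _
              _ = (if (q : ℕ × Set X1 × ℝ≥0∞) =
                    (mm (p : ℕ × Set X1 × ℝ≥0∞).1, Ext p σ,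
                      wt (mm (p : ℕ × Set X1 × ℝ≥0∞).1) (Ext p σ)) then β else 0) :=
                  (if_pos hqF).symm
              _ ≤ _ := ENNReal.le_tsum σ
          · rw [if_neg hsrc, zero_mul]
            exact zero_le
        calc ∑' q : D', (if mm (p : ℕ × Set X1 × ℝ≥0∞).1 = (q : ℕ × Set X1 × ℝ≥0∞).1 ∧
                ∃ σ : Φ, Ext p σ = (q : ℕ × Set X1 × ℝ≥0∞).2.1
              then (p : ℕ × Set X1 × ℝ≥0∞).2.2 else 0) *
              pterm (T1^[M]) (birk T1 f M) (a 0) (M * s)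
                (q : ℕ × Set X1 × ℝ≥0∞).1 (q : ℕ × Set X1 × ℝ≥0∞).2.1
            ≤ ∑' q : D', ∑' σ : Φ, (if (q : ℕ × Set X1 × ℝ≥0∞) =
                (mm (p : ℕ × Set X1 × ℝ≥0∞).1, Ext p σ,
                  wt (mm (p : ℕ × Set X1 × ℝ≥0∞).1) (Ext p σ)) then β else 0) :=
              ENNReal.tsum_le_tsum hterm
          _ = ∑' σ : Φ, ∑' q : D', (if (q : ℕ × Set X1 × ℝ≥0∞) =
                (mm (p : ℕ × Set X1 × ℝ≥0∞).1, Ext p σ,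
                  wt (mm (p : ℕ × Set X1 × ℝ≥0∞).1) (Ext p σ)) then β else 0) :=
              ENNReal.tsum_comm
          _ ≤ ∑' _ : Φ, β := by
              refine ENNReal.tsum_le_tsum fun σ => ?_
              calc ∑' q : D', (if (q : ℕ × Set X1 × ℝ≥0∞) =
                    (mm (p : ℕ × Set X1 × ℝ≥0∞).1, Ext p σ,
                      wt (mm (p : ℕ × Set X1 × ℝ≥0∞).1) (Ext p σ)) then β else 0)
                  ≤ ∑' y : ℕ × Set X1 × ℝ≥0∞, (if y =
                    (mm (p : ℕ × Set X1 × ℝ≥0∞).1, Ext p σ,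
                      wt (mm (p : ℕ × Set X1 × ℝ≥0∞).1) (Ext p σ)) then β else 0) :=
                    ENNReal.tsum_comp_le_tsum_of_injective Subtype.val_injective _
                _ = β := tsum_ite_eq _ (fun _ => β)
          _ = (Nat.card Φ : ℝ≥0∞) * β := by
              haveI : Fintype Φ := Fintype.ofFinite Φ
              rw [tsum_fintype, Finset.sum_const, Finset.card_univ, nsmul_eq_mul,
                Nat.card_eq_fintype_card]
    _ = ((Nat.card Φ : ℝ≥0∞) * CΔ) * ∑' p : D, (p : ℕ × Set X1 × ℝ≥0∞).2.2 *
          pterm T1 f (a 0) s (p : ℕ × Set X1 × ℝ≥0∞).1 (p : ℕ × Set X1 × ℝ≥0∞).2.1 := by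
        rw [← ENNReal.tsum_mul_left]
        exact tsum_congr fun p => by ring

end LemmaB


section Endgame
variable {k : ℕ} [NeZero k] {X1 : Type*} [MeasurableSpace X1]

lemma wLoc_of_isEmpty [IsEmpty X1] (T1 : X1 → X1) (a : Fin k → ℝ)
    (𝒱 : Fin k → Set (Set X1)) (f : X1 → ℝ) (s : ℝ) (Z : Set X1) :
    wLoc T1 a 𝒱 f s Z = 0 := by
  rw [wLoc]
  refine le_antisymm (iSup_le fun N => ?_) zero_le
  rw [wLocN]
  refine le_trans (iInf_le_of_le ∅ (iInf_le_of_le Set.countable_empty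
    (iInf_le_of_le (fun p hp => absurd hp (Set.notMem_empty p))
    (iInf_le_of_le (fun z _ => (IsEmpty.false z).elim) le_rfl)))) ?_
  rw [tsum_empty]

lemma EReal_sInf_pos_mul {c : ℝ} (hc : 0 < c) (S : Set EReal) :
    sInf ((fun x => (c : EReal) * x) '' S) = (c : EReal) * sInf S := by
  have hmono : ∀ (d : ℝ), 0 ≤ d → ∀ {x y : EReal}, x ≤ y →
      (d : EReal) * x ≤ (d : EReal) * y :=
    fun d hd _ _ h => mul_le_mul_of_nonneg_left h (by exact_mod_cast hd)
  apply le_antisymm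
  · have h1 : ((c⁻¹ : ℝ) : EReal) * sInf ((fun x => (c : EReal) * x) '' S) ≤ sInf S := by
      refine le_sInf fun x hx => ?_
      have h2 : sInf ((fun x => (c : EReal) * x) '' S) ≤ (c : EReal) * x :=
        sInf_le ⟨x, hx, rfl⟩
      calc ((c⁻¹ : ℝ) : EReal) * sInf ((fun x => (c : EReal) * x) '' S)
          ≤ ((c⁻¹ : ℝ) : EReal) * ((c : EReal) * x) :=
            hmono _ (inv_nonneg.mpr hc.le) h2
        _ = x := by
            rw [← mul_assoc, ← EReal.coe_mul, inv_mul_cancel₀ hc.ne', EReal.coe_one, one_mul]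
    calc sInf ((fun x => (c : EReal) * x) '' S)
        = (c : EReal) * (((c⁻¹ : ℝ) : EReal) * sInf ((fun x => (c : EReal) * x) '' S)) := by
          rw [← mul_assoc, ← EReal.coe_mul, mul_inv_cancel₀ hc.ne', EReal.coe_one, one_mul]
      _ ≤ (c : EReal) * sInf S := hmono _ hc.le h1
  · refine le_sInf fun y hy => ?_
    obtain ⟨x, hx, rfl⟩ := hy
    exact hmono _ hc.le (sInf_le hx)

lemma sInf_coe_univ_eq_bot : sInf (Real.toEReal '' (Set.univ : Set ℝ)) = (⊥ : EReal) := by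
  rw [sInf_eq_bot]
  intro b hb
  have : ∃ r : ℝ, (r : EReal) < b := by
    induction b using EReal.rec with
    | bot => exact absurd hb (lt_irrefl _)
    | coe r => exact ⟨r - 1, by exact_mod_cast sub_one_lt r⟩
    | top => exact ⟨0, EReal.coe_lt_top 0⟩
  obtain ⟨r, hr⟩ := this
  exact ⟨(r : EReal), ⟨r, Set.mem_univ r, rfl⟩, hr⟩

end Endgame

/-- power rule for the local average 𝐚-weighted pressure:
`P_W^𝐚(T₁, Z, {𝒰_i}, f) = (1/M) · P_W^𝐚(T₁^M, Z, {(𝒰_i)_0^{M-1}}, S_M f)`. -/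
theorem local_average_weighted_pressure_power
    {k : ℕ} [NeZero k]
    (X : Fin k → Type) [∀ i, MetricSpace (X i)] [∀ i, CompactSpace (X i)]
    [∀ i, MeasurableSpace (X i)] [∀ i, BorelSpace (X i)]
    (T : ∀ i, X i → X i) (hT : ∀ i, Continuous (T i))
    (τ : ∀ i, X 0 → X i) (hτ0 : τ 0 = id)
    (hτc : ∀ i, Continuous (τ i)) (hτs : ∀ i, Function.Surjective (τ i))
    (hτe : ∀ i, τ i ∘ T 0 = T i ∘ τ i)
    (hchain : ∀ i j : Fin k, i ≤ j → ∃ p : X i → X j,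
        Continuous p ∧ p ∘ T i = T j ∘ p ∧ p ∘ τ i = τ j)
    (a : Fin k → ℝ) (ha1 : 0 < a 0) (ha : ∀ i, 0 ≤ a i)
    (M : ℕ) (hM : 0 < M) (Z : Set (X 0)) (f : X 0 → ℝ) (hf : Continuous f)
    (𝒰 : ∀ i, Set (Set (X i))) (h𝒰 : ∀ i, IsOpenCover (𝒰 i)) :
    PWLoc (T 0) a (fun i => pullCov (τ i) (𝒰 i)) Z f
      = (((M : ℝ)⁻¹ : ℝ) : EReal) *
        PWLoc ((T 0)^[M]) a (fun i => pullCov (τ i) (covJoinT (T i) (𝒰 i) M)) Z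
          (birk (T 0) f M) := by
  classical
  rcases isEmpty_or_nonempty (X 0) with hemp | hne
  · have h1 : ∀ (T' : X 0 → X 0) (𝒱 : Fin k → Set (Set (X 0))) (g : X 0 → ℝ),
        PWLoc T' a 𝒱 Z g = (⊥ : EReal) := by
      intro T' 𝒱 g
      rw [PWLoc]
      have h2 : {s : ℝ | wLoc T' a 𝒱 g s Z = 0} = Set.univ := by
        ext s
        simp [wLoc_of_isEmpty]
      rw [h2, sInf_coe_univ_eq_bot]
    rw [h1, h1, EReal.mul_bot_of_pos]
    have hM' : (0 : ℝ) < (M : ℝ)⁻¹ := by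
      have : (0 : ℝ) < M := by exact_mod_cast hM
      positivity
    exact_mod_cast hM'
  · haveI hX1 : Nonempty (X 0) := hne
    obtain ⟨B, hB⟩ : ∃ B : ℝ, ∀ x, |f x| ≤ B := by
      have hc : IsCompact (Set.range fun x => |f x|) := isCompact_range hf.abs
      obtain ⟨B, hBB⟩ := hc.bddAbove
      exact ⟨B, fun x => hBB ⟨x, rfl⟩⟩
    have hB0 : 0 ≤ B := le_trans (abs_nonneg _) (hB Classical.ofNonempty)
    have hcw : ∀ i, 0 ≤ cw a i := fun i => Finset.sum_nonneg fun j _ => ha j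
    set 𝒱 : Fin k → Set (Set (X 0)) := fun i => pullCov (τ i) (𝒰 i) with h𝒱
    have hVfin : ∀ i, (𝒱 i).Finite := fun i => ((h𝒰 i).1).image _
    have hVcov : ∀ i, ⋃₀ 𝒱 i = Set.univ := by
      intro i
      rw [h𝒱]
      simp only [pullCov, Set.sUnion_image]
      rw [← Set.preimage_iUnion₂, ← Set.sUnion_eq_biUnion, (h𝒰 i).2.2, Set.preimage_univ]
    have hVmeas : ∀ i, ∀ V ∈ 𝒱 i, MeasurableSet V := by
      rintro i V ⟨U, hU, rfl⟩
      exact (hτc i).measurable (((h𝒰 i).2.1 U hU).measurableSet)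
    have hcovEq : (fun i => pullCov (τ i) (covJoinT (T i) (𝒰 i) M))
        = fun i => covJoinT (T 0) (𝒱 i) M := by
      funext i
      have hsc : ∀ x, τ i (T 0 x) = T i (τ i x) := fun x => congrFun (hτe i) x
      exact pullCov_covJoinT hsc (𝒰 i) M
    rw [hcovEq]
    have hiff : ∀ s : ℝ, wLoc (T 0) a 𝒱 f s Z = 0 ↔
        wLoc ((T 0)^[M]) a (fun i => covJoinT (T 0) (𝒱 i) M) (birk (T 0) f M) (M * s) Z
          = 0 := by
      intro s
      constructor
      · intro h
        rw [wLoc] at h ⊢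
        rw [ENNReal.iSup_eq_zero] at h ⊢
        intro N'
        have hle := wLocN_pow_le (T1 := T 0) (hT 0).measurable ha1 hcw hVfin hVcov hVmeas
          hB hM s N' Z
        rw [h (M * N'), mul_zero] at hle
        exact le_antisymm hle zero_le
      · intro h
        rw [wLoc] at h ⊢
        rw [ENNReal.iSup_eq_zero] at h ⊢
        intro N
        have hle := wLocN_mul_le (T 0) a hcw 𝒱 hB hB0 ha1 hM s N Z
        rw [h N, mul_zero] at hle
        exact le_antisymm hle zero_le
    have hSet : {s : ℝ | wLoc ((T 0)^[M]) a (fun i => covJoinT (T 0) (𝒱 i) M)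
          (birk (T 0) f M) s Z = 0}
        = (fun s => (M : ℝ) * s) '' {s : ℝ | wLoc (T 0) a 𝒱 f s Z = 0} := by
      ext s'
      simp only [Set.mem_setOf_eq, Set.mem_image]
      have hM0 : (M : ℝ) ≠ 0 := by
        have : (0 : ℝ) < M := by exact_mod_cast hM
        exact this.ne'
      constructor
      · intro h
        refine ⟨s' / M, ?_, by field_simp⟩
        rw [hiff]
        rw [show (M : ℝ) * (s' / M) = s' by field_simp]
        exact h
      · rintro ⟨s, hs, rfl⟩
        exact (hiff s).mp hs
    rw [PWLoc, PWLoc, hSet]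
    have himg : Real.toEReal '' ((fun s => (M : ℝ) * s) ''
          {s : ℝ | wLoc (T 0) a 𝒱 f s Z = 0})
        = (fun x : EReal => ((M : ℝ) : EReal) * x) ''
          (Real.toEReal '' {s : ℝ | wLoc (T 0) a 𝒱 f s Z = 0}) := by
      rw [Set.image_image, Set.image_image]
      exact Set.image_congr fun s _ => EReal.coe_mul _ _
    have hMpos : (0 : ℝ) < M := by exact_mod_cast hM
    rw [himg, EReal_sInf_pos_mul hMpos, ← mul_assoc, ← EReal.coe_mul,
      inv_mul_cancel₀ hMpos.ne', EReal.coe_one, one_mul]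

end WTP
end

section
/- (Local dynamical Frostman lemma) Let s ≥ 0, N ∈ ℕ, f ∈ C(X_1,ℝ), and let U_i be open covers of X_i, i=1,…,k. Suppose c = W^{a,s}_{N,{U_i}}(X_1, f) > 0. Then there exists a Borel probability measure μ on X_1 such that for every n ≥ N and every element A of the cover ⋁_{i=1}^k (τ_{i−1}^{−1}U_i)_0^{⌈(a_1+…+a_i)n⌉−1}, one has μ(A) ≤ (1/c) · exp(−n s + (1/a_1) sup_{x∈A} S_{⌈a_1 n⌉} f(x)). -/
open MeasureTheory Set Filter Topology
open scoped ENNReal symmDiff Pointwise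

namespace WTP

variable {k : ℕ}

section FrostmanAux

variable {k : ℕ}

lemma jointFiber_isOpen {X1 : Type*} [TopologicalSpace X1] {T1 : X1 → X1}
    (hT1 : Continuous T1) {a : Fin k → ℝ}
    {𝒱 : Fin k → Set (Set X1)} (h𝒱o : ∀ i, ∀ V ∈ 𝒱 i, IsOpen V) {n : ℕ} {A : Set X1}
    (hA : A ∈ jointFiber T1 a 𝒱 n) : IsOpen A := by
  obtain ⟨V, hV, rfl⟩ := hA
  refine isOpen_iInter_of_finite fun i => ?_
  refine isOpen_biInter_finset fun l hl => ?_
  exact (h𝒱o i _ (hV i l (Finset.mem_range.mp hl))).preimage (hT1.iterate l)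

lemma jointFiber_mem_cover {X1 : Type*} {T1 : X1 → X1} {a : Fin k → ℝ}
    {𝒱 : Fin k → Set (Set X1)} (h𝒱c : ∀ i, ⋃₀ 𝒱 i = Set.univ) (n : ℕ) (z : X1) :
    ∃ A ∈ jointFiber T1 a 𝒱 n, z ∈ A := by
  have h : ∀ (i : Fin k) (l : ℕ), ∃ V, V ∈ 𝒱 i ∧ T1^[l] z ∈ V := by
    intro i l
    have hz : T1^[l] z ∈ ⋃₀ 𝒱 i := by rw [h𝒱c i]; trivial
    obtain ⟨V, hV, hzV⟩ := hz
    exact ⟨V, hV, hzV⟩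
  choose V hV hzV using h
  refine ⟨_, ⟨V, fun i l _ => hV i l, rfl⟩, ?_⟩
  refine Set.mem_iInter.mpr fun i => Set.mem_iInter.mpr fun l => Set.mem_iInter.mpr fun _ => ?_
  exact hzV i l

theorem frostman_aux [NeZero k] {X1 : Type*} [MetricSpace X1] [CompactSpace X1]
    [MeasurableSpace X1] [BorelSpace X1]
    (T1 : X1 → X1) (hT1 : Continuous T1) (a : Fin k → ℝ)
    (𝒱 : Fin k → Set (Set X1)) (h𝒱o : ∀ i, ∀ V ∈ 𝒱 i, IsOpen V)
    (h𝒱c : ∀ i, ⋃₀ 𝒱 i = Set.univ)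
    (f : X1 → ℝ) (s : ℝ) (N : ℕ)
    (hc : 0 < wLocN T1 a 𝒱 f s N Set.univ) :
    ∃ μ : Measure X1, IsProbabilityMeasure μ ∧
      ∀ n : ℕ, N ≤ n → ∀ A ∈ jointFiber T1 a 𝒱 n,
        μ A ≤ (wLocN T1 a 𝒱 f s N Set.univ)⁻¹ * pterm T1 f (a 0) s n A := by
  classical
  set c : ℝ≥0∞ := wLocN T1 a 𝒱 f s N Set.univ with hcdef
  -- the defining infimum gives upper bounds
  have hwle : ∀ (D : Set (ℕ × Set X1 × ℝ≥0∞)), D.Countable →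
      (∀ p ∈ D, N ≤ p.1 ∧ MeasurableSet p.2.1 ∧ 0 < p.2.2 ∧ p.2.2 ≠ ⊤ ∧
          ∃ A ∈ jointFiber T1 a 𝒱 p.1, p.2.1 ⊆ A) →
      (∀ z ∈ (Set.univ : Set X1), 1 ≤ ∑' p : D, (p.1.2.1).indicator (fun _ => p.1.2.2) z) →
      c ≤ ∑' p : D, p.1.2.2 * pterm T1 f (a 0) s p.1.1 p.1.2.1 := by
    intro D h1 h2 h3
    rw [hcdef, wLocN]
    exact iInf_le_of_le D <| iInf_le_of_le h1 <| iInf_le_of_le h2 <| iInf_le _ h3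
  -- the space is nonempty
  rcases isEmpty_or_nonempty X1 with hE | hNE
  · exfalso
    have h0 := hwle ∅ Set.countable_empty (by simp) (fun z _ => (IsEmpty.false z).elim)
    rw [tsum_empty] at h0
    exact hc.not_ge h0
  -- a finite subcover at level N
  have hcov0 : (Set.univ : Set X1) ⊆ ⋃ A ∈ jointFiber T1 a 𝒱 N, A := by
    intro z _
    obtain ⟨A, hA, hz⟩ := jointFiber_mem_cover h𝒱c N z
    exact Set.mem_biUnion hA hz
  obtain ⟨S, hSsub, hSfin, hScov⟩ :=
    isCompact_univ.elim_finite_subcover_image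
      (fun A hA => jointFiber_isOpen hT1 h𝒱o hA) hcov0
  set PS : Finset (Set X1) := hSfin.toFinset with hPSdef
  have hmemS : ∀ A ∈ PS, A ∈ jointFiber T1 a 𝒱 N := fun A hA =>
    hSsub (hSfin.mem_toFinset.mp hA)
  have hfindS : ∀ z : X1, ∃ A ∈ PS, z ∈ A := by
    intro z
    obtain ⟨A, hA, hz⟩ := Set.mem_iUnion₂.mp (hScov (Set.mem_univ z))
    exact ⟨A, hSfin.mem_toFinset.mpr hA, hz⟩
  -- tsum over an image family equals a finite sum
  have htsum_image : ∀ (P : Finset (ℕ × Set X1)) (t : ℕ × Set X1 → ℝ≥0∞)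
      (g : ℕ × Set X1 × ℝ≥0∞ → ℝ≥0∞),
      ∑' p : ((fun q : ℕ × Set X1 => (q.1, q.2, t q)) '' (P : Set (ℕ × Set X1))), g p
        = ∑ q ∈ P, g (q.1, q.2, t q) := by
    intro P t g
    rw [tsum_image g (fun p _ q _ h => ?_)]
    · exact Finset.tsum_subtype P (fun q => g (q.1, q.2, t q))
    · simp only [Prod.mk.injEq] at h
      exact Prod.ext h.1 h.2.1
  -- c is finite
  have hcne : c ≠ ⊤ := by
    set P1 : Finset (ℕ × Set X1) := PS.image (fun A => (N, A)) with hP1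
    have hmemP1 : ∀ p ∈ P1, p.1 = N ∧ p.2 ∈ jointFiber T1 a 𝒱 N := by
      intro p hp
      obtain ⟨A, hA, rfl⟩ := Finset.mem_image.mp hp
      exact ⟨rfl, hmemS A hA⟩
    have hle := hwle ((fun q : ℕ × Set X1 => (q.1, q.2, (1:ℝ≥0∞))) '' (P1 : Set _))
      (P1.countable_toSet.image _) ?_ ?_
    · refine ne_top_of_le_ne_top ?_ hle
      rw [htsum_image P1 (fun _ => 1)
        (fun r => r.2.2 * pterm T1 f (a 0) s r.1 r.2.1)]
      refine (ENNReal.sum_lt_top.mpr fun q hq => ?_).ne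
      simp only [one_mul, pterm]
      exact ENNReal.ofReal_lt_top
    · rintro p ⟨q, hq, rfl⟩
      obtain ⟨h1, h2⟩ := hmemP1 q hq
      exact ⟨h1.ge, (jointFiber_isOpen hT1 h𝒱o h2).measurableSet, zero_lt_one,
        ENNReal.one_ne_top, ⟨q.2, h1.symm ▸ h2, subset_rfl⟩⟩
    · intro z _
      obtain ⟨A, hAPS, hzA⟩ := hfindS z
      have hq : ((N, A) : ℕ × Set X1) ∈ P1 := Finset.mem_image_of_mem _ hAPS
      refine le_trans ?_ (ENNReal.le_tsum ⟨((N : ℕ), A, (1:ℝ≥0∞)),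
        Set.mem_image_of_mem _ hq⟩)
      simp [Set.indicator_of_mem hzA]
  have hcR : (0:ℝ) < c.toReal := ENNReal.toReal_pos hc.ne' hcne
  set cR : ℝ := c.toReal with hcRdef
  set wfun : ℕ → Set X1 → ℝ := fun n A =>
    Real.exp (-(s * n) + (1 / a 0) * sSup (birk T1 f ⌈a 0 * (n : ℝ)⌉₊ '' A)) with hwfun
  have hpt : ∀ (n : ℕ) (A : Set X1), pterm T1 f (a 0) s n A = ENNReal.ofReal (wfun n A) :=
    fun _ _ => rfl
  have hwpos : ∀ (n : ℕ) (A : Set X1), 0 < wfun n A := fun _ _ => Real.exp_pos _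
  set Feas : C(X1, ℝ) → Set ℝ := fun g =>
    { r | ∃ P : Finset (ℕ × Set X1), ∃ t : ℕ × Set X1 → ℝ,
      (∀ p ∈ P, N ≤ p.1 ∧ p.2 ∈ jointFiber T1 a 𝒱 p.1) ∧ (∀ p, 0 ≤ t p) ∧
      (∀ p ∉ P, t p = 0) ∧
      (∀ x, g x ≤ ∑ p ∈ P, t p * (p.2).indicator (fun _ => (1:ℝ)) x) ∧
      r = ∑ p ∈ P, t p * wfun p.1 p.2 } with hFeasdef
  have hFeas0 : ∀ (g) (r) (_ : r ∈ Feas g), 0 ≤ r := by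
    rintro g r ⟨P, t, hm, h0, hz, hp, rfl⟩
    exact Finset.sum_nonneg fun p _ => mul_nonneg (h0 p) (hwpos p.1 p.2).le
  have hFbdd : ∀ g, BddBelow (Feas g) := fun g => ⟨0, fun r hr => hFeas0 g r hr⟩
  have hFne : ∀ g, (Feas g).Nonempty := by
    intro g
    obtain ⟨x0, -, hx0⟩ := isCompact_univ.exists_isMaxOn Set.univ_nonempty
      g.continuous.continuousOn
    set M : ℝ := max (g x0) 0 with hM
    have hMnn : 0 ≤ M := le_max_right _ _
    set P : Finset (ℕ × Set X1) := PS.image (fun A => ((N : ℕ), A)) with hP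
    set t : ℕ × Set X1 → ℝ := fun p => if p ∈ P then M else 0 with ht
    refine ⟨∑ p ∈ P, t p * wfun p.1 p.2, P, t, ?_, ?_, ?_, ?_, rfl⟩
    · intro p hp
      obtain ⟨A, hA, rfl⟩ := Finset.mem_image.mp hp
      exact ⟨le_rfl, hmemS A hA⟩
    · intro p
      simp only [ht]
      split <;> simp [hMnn]
    · intro p hp
      simp only [ht]
      simp [hp]
    · intro x
      obtain ⟨A, hAPS, hxA⟩ := hfindS x
      have hmem : ((N : ℕ), A) ∈ P := Finset.mem_image_of_mem _ hAPS
      calc g x ≤ g x0 := hx0 (Set.mem_univ x)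
        _ ≤ M := le_max_left _ _
        _ = t ((N : ℕ), A) * (A.indicator (fun _ => (1:ℝ)) x) := by
            simp only [ht, if_pos hmem, Set.indicator_of_mem hxA, mul_one]
        _ ≤ ∑ p ∈ P, t p * (p.2).indicator (fun _ => (1:ℝ)) x := by
            refine Finset.single_le_sum
              (f := fun p : ℕ × Set X1 => t p * (p.2).indicator (fun _ => (1:ℝ)) x)
              (fun p _ => ?_) hmem
            refine mul_nonneg ?_ (Set.indicator_nonneg (fun _ _ => zero_le_one) x)
            simp only [ht]
            split <;> simp [hMnn]
  set pG : C(X1, ℝ) → ℝ := fun g => sInf (Feas g) with hpGdef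
  have hpG_le : ∀ (g) (r) (_ : r ∈ Feas g), pG g ≤ r := fun g r hr => csInf_le (hFbdd g) hr
  have hpG0 : ∀ g, 0 ≤ pG g := fun g => le_csInf (hFne g) (hFeas0 g)
  have hpG_npos : ∀ g : C(X1, ℝ), (∀ x, g x ≤ 0) → pG g ≤ 0 := by
    intro g hg
    refine hpG_le g 0 ⟨∅, fun _ => 0, by simp, fun _ => le_rfl, fun _ _ => rfl, ?_, by simp⟩
    intro x; simpa using hg x
  have hcomb : ∀ (g1 g2 : C(X1,ℝ)) (r1 r2 : ℝ), r1 ∈ Feas g1 → r2 ∈ Feas g2 →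
      r1 + r2 ∈ Feas (g1 + g2) := by
    rintro g1 g2 r1 r2 ⟨P1, t1, hm1, h01, hz1, hp1, rfl⟩ ⟨P2, t2, hm2, h02, hz2, hp2, rfl⟩
    have e1 : ∀ (u : ℕ × Set X1 → ℝ), ∑ p ∈ P1, t1 p * u p = ∑ p ∈ P1 ∪ P2, t1 p * u p :=
      fun u => Finset.sum_subset Finset.subset_union_left
        (fun p _ hp => by rw [hz1 p hp, zero_mul])
    have e2 : ∀ (u : ℕ × Set X1 → ℝ), ∑ p ∈ P2, t2 p * u p = ∑ p ∈ P1 ∪ P2, t2 p * u p :=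
      fun u => Finset.sum_subset Finset.subset_union_right
        (fun p _ hp => by rw [hz2 p hp, zero_mul])
    refine ⟨P1 ∪ P2, t1 + t2, ?_, fun p => add_nonneg (h01 p) (h02 p), ?_, ?_, ?_⟩
    · intro p hp
      rcases Finset.mem_union.mp hp with h | h
      exacts [hm1 p h, hm2 p h]
    · intro p hp
      rw [Finset.mem_union, not_or] at hp
      simp [hz1 p hp.1, hz2 p hp.2]
    · intro x
      have hx := add_le_add (hp1 x) (hp2 x)
      refine le_trans (by simpa using hx) ?_
      rw [e1 (fun p => (p.2).indicator (fun _ => (1:ℝ)) x),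
        e2 (fun p => (p.2).indicator (fun _ => (1:ℝ)) x), ← Finset.sum_add_distrib]
      refine le_of_eq (Finset.sum_congr rfl fun p _ => ?_)
      simp [add_mul]
    · rw [e1 (fun p => wfun p.1 p.2), e2 (fun p => wfun p.1 p.2), ← Finset.sum_add_distrib]
      exact Finset.sum_congr rfl fun p _ => by simp [add_mul]
  have hadd : ∀ g1 g2 : C(X1,ℝ), pG (g1 + g2) ≤ pG g1 + pG g2 := by
    intro g1 g2
    have h2 : ∀ r1 ∈ Feas g1, pG (g1 + g2) - r1 ≤ pG g2 := by
      intro r1 hr1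
      refine le_csInf (hFne g2) fun r2 hr2 => ?_
      have := hpG_le _ _ (hcomb g1 g2 r1 r2 hr1 hr2)
      linarith
    have h1 : pG (g1 + g2) - pG g2 ≤ pG g1 := by
      refine le_csInf (hFne g1) fun r1 hr1 => ?_
      have := h2 r1 hr1
      linarith
    linarith
  have hsmul : ∀ (co : ℝ), 0 < co → ∀ g : C(X1,ℝ), pG (co • g) = co * pG g := by
    intro co hco g
    have hdivco : ∀ u : ℝ, co * (u / co) = u := fun u => by field_simp
    have hset : Feas (co • g) = co • Feas g := by
      ext r
      constructor
      · rintro ⟨P, t, hm, h0, hz, hp, rfl⟩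
        refine Set.mem_smul_set.mpr ⟨∑ p ∈ P, (t p / co) * wfun p.1 p.2,
          ⟨P, fun p => t p / co, hm, fun p => div_nonneg (h0 p) hco.le,
            fun p hp => by show t p / co = 0; rw [hz p hp, zero_div], ?_, rfl⟩, ?_⟩
        · intro x
          have hx := hp x
          rw [ContinuousMap.smul_apply, smul_eq_mul] at hx
          rw [show ∑ p ∈ P, t p / co * (p.2).indicator (fun _ => (1:ℝ)) x
              = (∑ p ∈ P, t p * (p.2).indicator (fun _ => (1:ℝ)) x) / co by
            rw [Finset.sum_div]; exact Finset.sum_congr rfl fun p _ => by ring]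
          rw [le_div_iff₀ hco, mul_comm]
          exact hx
        · rw [smul_eq_mul, Finset.mul_sum]
          exact Finset.sum_congr rfl fun p _ => by rw [← mul_assoc, hdivco (t p)]
      · rintro hr
        obtain ⟨r0, ⟨P, t, hm, h0, hz, hp, rfl⟩, rfl⟩ := Set.mem_smul_set.mp hr
        refine ⟨P, fun p => co * t p, hm, fun p => mul_nonneg hco.le (h0 p),
          fun p hp => by show co * t p = 0; rw [hz p hp, mul_zero], ?_, ?_⟩
        · intro x
          rw [ContinuousMap.smul_apply, smul_eq_mul]
          calc co * g x ≤ co * ∑ p ∈ P, t p * (p.2).indicator (fun _ => (1:ℝ)) x :=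
              mul_le_mul_of_nonneg_left (hp x) hco.le
            _ = ∑ p ∈ P, co * t p * (p.2).indicator (fun _ => (1:ℝ)) x := by
              rw [Finset.mul_sum]
              exact Finset.sum_congr rfl fun p _ => by ring
        · rw [smul_eq_mul, Finset.mul_sum]
          exact Finset.sum_congr rfl fun p _ => by ring
    simp only [hpGdef]
    rw [hset, Real.sInf_smul_of_nonneg hco.le, smul_eq_mul]
  -- the infimum defining `c` bounds every feasible sum for the constant function 1
  have hkey : ∀ r ∈ Feas (1 : C(X1, ℝ)), cR ≤ r := by
    rintro r ⟨P, t, hm, h0, hz, hpnt, rfl⟩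
    set P' : Finset (ℕ × Set X1) := P.filter (fun p => 0 < t p) with hP'
    set tE : ℕ × Set X1 → ℝ≥0∞ := fun p => ENNReal.ofReal (t p) with htE
    have hle := hwle ((fun q : ℕ × Set X1 => (q.1, q.2, tE q)) '' (P' : Set _))
      (P'.countable_toSet.image _) ?_ ?_
    · rw [htsum_image P' tE (fun r => r.2.2 * pterm T1 f (a 0) s r.1 r.2.1)] at hle
      have hsum : ∑ q ∈ P', tE q * pterm T1 f (a 0) s q.1 q.2
          = ENNReal.ofReal (∑ q ∈ P, t q * wfun q.1 q.2) := by
        have e1 : ∀ q ∈ P', tE q * pterm T1 f (a 0) s q.1 q.2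
            = ENNReal.ofReal (t q * wfun q.1 q.2) := by
          intro q _
          simp only [hpt, htE]
          rw [← ENNReal.ofReal_mul (h0 q)]
        rw [Finset.sum_congr rfl e1, ← ENNReal.ofReal_sum_of_nonneg
          (fun q _ => mul_nonneg (h0 q) (hwpos _ _).le)]
        congr 1
        refine Finset.sum_filter_of_ne fun q hq hne => ?_
        by_contra hpos
        have ht0 : t q = 0 := le_antisymm (not_lt.mp hpos) (h0 q)
        exact hne (by rw [ht0, zero_mul])
      rw [hsum] at hle
      have hfin := ENNReal.toReal_mono ENNReal.ofReal_ne_top hle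
      rwa [ENNReal.toReal_ofReal (Finset.sum_nonneg fun q _ =>
        mul_nonneg (h0 q) (hwpos _ _).le)] at hfin
    · rintro p ⟨q, hq, rfl⟩
      have hq' := Finset.mem_filter.mp hq
      obtain ⟨hN, hJ⟩ := hm q hq'.1
      refine ⟨hN, (jointFiber_isOpen hT1 h𝒱o hJ).measurableSet, ?_,
        ENNReal.ofReal_ne_top, ⟨q.2, hJ, subset_rfl⟩⟩
      simp only [htE]
      exact ENNReal.ofReal_pos.mpr hq'.2
    · intro z _
      rw [htsum_image P' tE (fun r => r.2.1.indicator (fun _ => r.2.2) z)]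
      have h1 : (1:ℝ) ≤ ∑ p ∈ P, t p * (p.2).indicator (fun _ => (1:ℝ)) z := by
        simpa using hpnt z
      have h2 : ∀ q ∈ P, ENNReal.ofReal (t q * (q.2).indicator (fun _ => (1:ℝ)) z)
          = (q.2).indicator (fun _ => tE q) z := by
        intro q _
        by_cases hzq : z ∈ q.2
        · simp [Set.indicator_of_mem hzq, htE]
        · simp [Set.indicator_of_notMem hzq, htE]
      calc (1:ℝ≥0∞) = ENNReal.ofReal 1 := by simp
        _ ≤ ENNReal.ofReal (∑ p ∈ P, t p * (p.2).indicator (fun _ => (1:ℝ)) z) :=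
            ENNReal.ofReal_le_ofReal h1
        _ = ∑ q ∈ P, (q.2).indicator (fun _ => tE q) z := by
            rw [ENNReal.ofReal_sum_of_nonneg (fun q _ => mul_nonneg (h0 q)
              (Set.indicator_nonneg (fun _ _ => zero_le_one) z))]
            exact Finset.sum_congr rfl h2
        _ = ∑ q ∈ P', (q.2).indicator (fun _ => tE q) z := by
            refine (Finset.sum_filter_of_ne fun q hq hne => ?_).symm
            by_contra hpos
            have ht0 : t q = 0 := le_antisymm (not_lt.mp hpos) (h0 q)
            refine hne ?_
            have : tE q = 0 := by simp [htE, ht0]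
            simp [this]
  have hp1 : cR ≤ pG 1 := le_csInf (hFne 1) hkey
  -- Hahn–Banach extension
  have hf0H : ∀ co : ℝ, co • (1 : C(X1, ℝ)) = 0 → co • cR = 0 := by
    intro co hco
    have h1 := ContinuousMap.congr_fun hco (Classical.arbitrary X1)
    simp at h1
    simp [h1]
  set f0 : C(X1, ℝ) →ₗ.[ℝ] ℝ := LinearPMap.mkSpanSingleton' (1 : C(X1, ℝ)) cR hf0H with hf0
  have hf0le : ∀ v : f0.domain, f0 v ≤ pG v := by
    rintro ⟨v, hv⟩
    have hv' : v ∈ Submodule.span ℝ {(1 : C(X1, ℝ))} := hv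
    obtain ⟨co, hco⟩ := Submodule.mem_span_singleton.mp hv'
    have happ : f0 ⟨v, hv⟩ = co * cR := by
      have h' : co • (1 : C(X1,ℝ)) ∈ f0.domain := by rw [hco]; exact hv
      have e1 : f0 ⟨co • (1 : C(X1,ℝ)), h'⟩ = co • cR :=
        LinearPMap.mkSpanSingleton'_apply (1 : C(X1,ℝ)) cR hf0H co h'
      have e2 : (⟨v, hv⟩ : f0.domain) = ⟨co • (1 : C(X1,ℝ)), h'⟩ := Subtype.ext hco.symm
      rw [e2]
      simpa [smul_eq_mul] using e1
    rw [happ]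
    rcases lt_trichotomy co 0 with h | h | h
    · have hneg : co * cR ≤ 0 := mul_nonpos_iff.mpr (Or.inr ⟨h.le, hcR.le⟩)
      exact le_trans hneg (hpG0 _)
    · subst h
      simpa using hpG0 v
    · calc co * cR ≤ co * pG 1 := mul_le_mul_of_nonneg_left hp1 h.le
        _ = pG (co • 1) := (hsmul co h 1).symm
        _ = pG v := by rw [hco]
  obtain ⟨L, hLf, hLp⟩ := exists_extension_of_le_sublinear f0 pG
    (fun co hco g => hsmul co hco g) hadd hf0le
  have hL1 : L 1 = cR := by
    have hmem : (1 : C(X1,ℝ)) ∈ f0.domain := Submodule.mem_span_singleton_self _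
    have h2 : f0 ⟨1, hmem⟩ = cR := LinearPMap.mkSpanSingleton'_apply_self _ _ _ _
    rw [← h2]
    exact hLf ⟨1, hmem⟩
  have hLmono : ∀ g1 g2 : C(X1,ℝ), (∀ x, g1 x ≤ g2 x) → L g1 ≤ L g2 := by
    intro g1 g2 h
    have h1 : L (g1 - g2) ≤ 0 := le_trans (hLp _) (hpG_npos _ (fun x => by
      simp only [ContinuousMap.sub_apply]
      linarith [h x]))
    have h2 : L (g1 - g2) = L g1 - L g2 := map_sub L g1 g2
    linarith
  have hLnonneg : ∀ g : C(X1,ℝ), (∀ x, 0 ≤ g x) → 0 ≤ L g := by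
    intro g hg
    have := hLmono 0 g (fun x => by simpa using hg x)
    rwa [map_zero] at this
  -- the Riesz content associated with L
  set LSet : Set X1 → Set ℝ := fun K =>
    {r | ∃ g : C(X1,ℝ), (∀ x, 0 ≤ g x) ∧ (∀ x ∈ K, 1 ≤ g x) ∧ r = L g} with hLSetdef
  have hLSne : ∀ K : Set X1, cR ∈ LSet K := by
    intro K
    exact ⟨1, fun x => by simp, fun x _ => by simp, hL1.symm⟩
  have hLSnn : ∀ (K : Set X1) (r) (_ : r ∈ LSet K), 0 ≤ r := by
    rintro K r ⟨g, hg0, -, rfl⟩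
    exact hLnonneg g hg0
  have hLSbdd : ∀ K : Set X1, BddBelow (LSet K) := fun K => ⟨0, fun r hr => hLSnn K r hr⟩
  set lam : Set X1 → ℝ := fun K => sInf (LSet K) with hlamdef
  have hlam_nn : ∀ K, 0 ≤ lam K := fun K => le_csInf ⟨cR, hLSne K⟩ (hLSnn K)
  have hlam_le : ∀ (K : Set X1) (g : C(X1,ℝ)), (∀ x, 0 ≤ g x) → (∀ x ∈ K, 1 ≤ g x) →
      lam K ≤ L g := fun K g h1 h2 => csInf_le (hLSbdd K) ⟨g, h1, h2, rfl⟩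
  have hlam_mono : ∀ K1 K2 : Set X1, K1 ⊆ K2 → lam K1 ≤ lam K2 := by
    intro K1 K2 h
    refine csInf_le_csInf (hLSbdd K1) ⟨cR, hLSne K2⟩ ?_
    rintro r ⟨g, hg0, hg1, rfl⟩
    exact ⟨g, hg0, fun x hx => hg1 x (h hx), rfl⟩
  have hlam_subadd : ∀ K1 K2 : Set X1, lam (K1 ∪ K2) ≤ lam K1 + lam K2 := by
    intro K1 K2
    refine le_of_forall_pos_le_add ?_
    intro ε hε
    obtain ⟨r1, hr1m, hr1⟩ := Real.lt_sInf_add_pos ⟨cR, hLSne K1⟩ (half_pos hε)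
    obtain ⟨r2, hr2m, hr2⟩ := Real.lt_sInf_add_pos ⟨cR, hLSne K2⟩ (half_pos hε)
    have hr1' : r1 < lam K1 + ε / 2 := hr1
    have hr2' : r2 < lam K2 + ε / 2 := hr2
    obtain ⟨g1, hg10, hg11, rfl⟩ := hr1m
    obtain ⟨g2, hg20, hg21, rfl⟩ := hr2m
    have hle : lam (K1 ∪ K2) ≤ L (g1 + g2) := by
      refine hlam_le _ _ (fun x => ?_) (fun x hx => ?_)
      · simp only [ContinuousMap.add_apply]
        exact add_nonneg (hg10 x) (hg20 x)
      · simp only [ContinuousMap.add_apply]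
        rcases hx with hx | hx
        · linarith [hg11 x hx, hg20 x]
        · linarith [hg21 x hx, hg10 x]
    rw [map_add] at hle
    linarith
  have hlam_super : ∀ K1 K2 : Set X1, IsClosed K1 → IsClosed K2 → Disjoint K1 K2 →
      lam K1 + lam K2 ≤ lam (K1 ∪ K2) := by
    intro K1 K2 hc1 hc2 hd
    refine le_csInf ⟨cR, hLSne _⟩ ?_
    rintro r ⟨g, hg0, hg1, rfl⟩
    obtain ⟨h, hh2, hh1, hhI⟩ := exists_continuous_zero_one_of_isClosed hc2 hc1 hd.symm
    have hK1 : lam K1 ≤ L (g * h) := by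
      refine hlam_le _ _ (fun x => ?_) (fun x hx => ?_)
      · simp only [ContinuousMap.mul_apply]
        exact mul_nonneg (hg0 x) (hhI x).1
      · simp only [ContinuousMap.mul_apply]
        have h1x : h x = 1 := by have := hh1 hx; simpa using this
        rw [h1x, mul_one]
        exact hg1 x (Or.inl hx)
    have hK2 : lam K2 ≤ L (g - g * h) := by
      refine hlam_le _ _ (fun x => ?_) (fun x hx => ?_)
      · simp only [ContinuousMap.sub_apply, ContinuousMap.mul_apply]
        nlinarith [(hhI x).1, (hhI x).2, hg0 x]
      · simp only [ContinuousMap.sub_apply, ContinuousMap.mul_apply]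
        have h0x : h x = 0 := by have := hh2 hx; simpa using this
        rw [h0x, mul_zero, sub_zero]
        exact hg1 x (Or.inr hx)
    have hsplit : L (g * h) = L g - L (g - g * h) := by
      rw [map_sub]
      ring
    linarith
  set κ : Content X1 :=
    { toFun := fun K => Real.toNNReal (lam (K : Set X1))
      mono' := fun K1 K2 h => Real.toNNReal_mono (hlam_mono _ _ h)
      sup_disjoint' := by
        intro K1 K2 hd h1 h2
        show Real.toNNReal (lam ((K1 ⊔ K2 : TopologicalSpace.Compacts X1) : Set X1))
            = Real.toNNReal (lam (K1 : Set X1)) + Real.toNNReal (lam (K2 : Set X1))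
        rw [TopologicalSpace.Compacts.coe_sup]
        rw [le_antisymm (hlam_subadd _ _) (hlam_super _ _ h1 h2 hd)]
        exact Real.toNNReal_add (hlam_nn _) (hlam_nn _)
      sup_le' := by
        intro K1 K2
        show Real.toNNReal (lam ((K1 ⊔ K2 : TopologicalSpace.Compacts X1) : Set X1))
            ≤ Real.toNNReal (lam (K1 : Set X1)) + Real.toNNReal (lam (K2 : Set X1))
        rw [TopologicalSpace.Compacts.coe_sup, ← Real.toNNReal_add (hlam_nn _) (hlam_nn _)]
        exact Real.toNNReal_mono (hlam_subadd _ _) } with hκdef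
  have hκeq : ∀ K : TopologicalSpace.Compacts X1, (κ K : ℝ≥0∞) = ENNReal.ofReal (lam (K : Set X1)) :=
    fun _ => rfl
  set μ0 : Measure X1 := κ.measure with hμ0def
  have hμ0open : ∀ (U : Set X1) (hU : IsOpen U), μ0 U = κ.innerContent ⟨U, hU⟩ := by
    intro U hU
    rw [hμ0def, Content.measure_apply _ hU.measurableSet,
      κ.outerMeasure_of_isOpen U hU]
  have hinner_le : ∀ (U : TopologicalSpace.Opens X1) (b : ℝ), 0 ≤ b →
      (∀ K : TopologicalSpace.Compacts X1, (K : Set X1) ⊆ (U : Set X1) → lam (K : Set X1) ≤ b) →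
      κ.innerContent U ≤ ENNReal.ofReal b := by
    intro U b hb hK
    show (⨆ (K : TopologicalSpace.Compacts X1) (_ : (K : Set X1) ⊆ (U : Set X1)), κ K) ≤ ENNReal.ofReal b
    refine iSup₂_le fun K hKU => ?_
    rw [hκeq K]
    exact ENNReal.ofReal_le_ofReal (hK K hKU)
  have hlamuniv : lam (Set.univ : Set X1) = cR := by
    refine le_antisymm ?_ ?_
    · have h1 : lam (Set.univ : Set X1) ≤ L 1 :=
        hlam_le _ 1 (fun x => by simp) (fun x _ => by simp)
      rwa [hL1] at h1
    · refine le_csInf ⟨cR, hLSne _⟩ ?_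
      rintro r ⟨g, hg0, hg1, rfl⟩
      have := hLmono 1 g (fun x => by simpa using hg1 x trivial)
      rwa [hL1] at this
  have hμ0univ : μ0 Set.univ = ENNReal.ofReal cR := by
    rw [hμ0open Set.univ isOpen_univ]
    apply le_antisymm
    · refine hinner_le ⟨Set.univ, isOpen_univ⟩ cR hcR.le fun K _ => ?_
      have h1 : lam (K : Set X1) ≤ lam (Set.univ : Set X1) :=
        hlam_mono _ _ (Set.subset_univ _)
      rwa [hlamuniv] at h1
    · have h1 : (κ ⟨Set.univ, isCompact_univ⟩ : ℝ≥0∞)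
          ≤ κ.innerContent ⟨Set.univ, isOpen_univ⟩ :=
        κ.le_innerContent _ _ (subset_refl _)
      refine le_trans (le_of_eq ?_) h1
      rw [hκeq]
      simp only [TopologicalSpace.Compacts.coe_mk]
      rw [hlamuniv]
  have hμ0A : ∀ (n : ℕ), N ≤ n → ∀ A ∈ jointFiber T1 a 𝒱 n,
      μ0 A ≤ ENNReal.ofReal (wfun n A) := by
    intro n hn A hA
    have hAo : IsOpen A := jointFiber_isOpen hT1 h𝒱o hA
    rw [hμ0open A hAo]
    refine hinner_le ⟨A, hAo⟩ (wfun n A) (hwpos n A).le fun K hKA => ?_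
    obtain ⟨h, hh0, hh1, hhI⟩ := exists_continuous_zero_one_of_isClosed
      hAo.isClosed_compl K.isCompact.isClosed
      (Set.disjoint_compl_right_iff_subset.mpr hKA).symm
    have hlamK : lam (K : Set X1) ≤ L h := by
      refine hlam_le _ h (fun x => (hhI x).1) (fun x hx => ?_)
      have := hh1 hx
      simp only [Pi.one_apply] at this
      rw [this]
    refine le_trans hlamK (le_trans (hLp h) ?_)
    refine hpG_le h (wfun n A) ?_
    refine ⟨{(n, A)}, fun p => if p = (n, A) then 1 else 0, ?_, ?_, ?_, ?_, ?_⟩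
    · intro p hp
      rw [Finset.mem_singleton] at hp
      subst hp
      exact ⟨hn, hA⟩
    · intro p
      dsimp only
      split <;> norm_num
    · intro p hp
      rw [Finset.mem_singleton] at hp
      simp [hp]
    · intro x
      rw [Finset.sum_singleton]
      dsimp only
      rw [if_pos rfl, one_mul]
      by_cases hx : x ∈ A
      · rw [Set.indicator_of_mem hx]
        exact (hhI x).2
      · rw [Set.indicator_of_notMem hx]
        have := hh0 hx
        simp only [Pi.zero_apply] at this
        rw [this]
    · rw [Finset.sum_singleton]
      dsimp only
      rw [if_pos rfl, one_mul]
  refine ⟨c⁻¹ • μ0, ?_, ?_⟩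
  · constructor
    rw [Measure.smul_apply, smul_eq_mul, hμ0univ]
    rw [show ENNReal.ofReal cR = c from ENNReal.ofReal_toReal hcne]
    exact ENNReal.inv_mul_cancel hc.ne' hcne
  · intro n hn A hA
    rw [Measure.smul_apply, smul_eq_mul, hpt n A]
    exact mul_le_mul_right (hμ0A n hn A hA) _

end FrostmanAux

/-- (local dynamical Frostman lemma) If
`c = W^{𝐚,s}_{N,{𝒰_i}}(X₁, f) > 0`, then there is a Borel probability measure `μ` on `X₁`
such that `μ(A) ≤ (1/c)·exp(−ns + (1/a₁) sup_{x∈A} S_{⌈a₁n⌉} f(x))` for every `n ≥ N` and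
every element `A` of the cover `⋁_{i=1}^k (τ_{i-1}^{-1}𝒰_i)_0^{⌈(a_1+…+a_i)n⌉-1}`. -/
theorem local_dynamical_frostman
    {k : ℕ} [NeZero k]
    (X : Fin k → Type) [∀ i, MetricSpace (X i)] [∀ i, CompactSpace (X i)]
    [∀ i, MeasurableSpace (X i)] [∀ i, BorelSpace (X i)]
    (T : ∀ i, X i → X i) (hT : ∀ i, Continuous (T i))
    (τ : ∀ i, X 0 → X i) (hτ0 : τ 0 = id)
    (hτc : ∀ i, Continuous (τ i)) (hτs : ∀ i, Function.Surjective (τ i))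
    (hτe : ∀ i, τ i ∘ T 0 = T i ∘ τ i)
    (hchain : ∀ i j : Fin k, i ≤ j → ∃ p : X i → X j,
        Continuous p ∧ p ∘ T i = T j ∘ p ∧ p ∘ τ i = τ j)
    (a : Fin k → ℝ) (ha1 : 0 < a 0) (ha : ∀ i, 0 ≤ a i)
    (𝒰 : ∀ i, Set (Set (X i))) (h𝒰 : ∀ i, IsOpenCover (𝒰 i))
    (f : X 0 → ℝ) (hf : Continuous f) (s : ℝ) (hs : 0 ≤ s) (N : ℕ)
    (hc : 0 < wLocN (T 0) a (fun i => pullCov (τ i) (𝒰 i)) f s N Set.univ) :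
    ∃ μ : Measure (X 0), IsProbabilityMeasure μ ∧
      ∀ n : ℕ, N ≤ n →
        ∀ A ∈ jointFiber (T 0) a (fun i => pullCov (τ i) (𝒰 i)) n,
          μ A ≤ (wLocN (T 0) a (fun i => pullCov (τ i) (𝒰 i)) f s N Set.univ)⁻¹ *
            pterm (T 0) f (a 0) s n A := by
  refine frostman_aux (T 0) (hT 0) a (fun i => pullCov (τ i) (𝒰 i)) ?_ ?_ f s N hc
  · intro i V hV
    obtain ⟨U, hU, rfl⟩ := hV
    exact ((h𝒰 i).2.1 U hU).preimage (hτc i)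
  · intro i
    show ⋃₀ ((fun U => τ i ⁻¹' U) '' (𝒰 i)) = Set.univ
    rw [Set.sUnion_image]
    have h1 : ⋃ U ∈ 𝒰 i, τ i ⁻¹' U = τ i ⁻¹' (⋃₀ 𝒰 i) := by
      rw [Set.sUnion_eq_biUnion]
      simp [Set.preimage_iUnion]
    rw [h1, (h𝒰 i).2.2, Set.preimage_univ]

end WTP
end

section
/- Let π: (X,T) → (Y,S) be a factor map between TDSs, μ ∈ M(X,T), α = {A_1, A_2, …, A_k} a finite Borel partition of Y, and ε > 0. Then there exists an open cover U of Y with k elements such that for any j ≥ 0 and any finite Borel partition β of X refining T^{−j}π^{−1}U, one has H_μ(T^{−j}π^{−1}α | β) < ε. -/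
open MeasureTheory Set Filter Topology
open scoped ENNReal symmDiff

namespace WTP

variable {k : ℕ}

lemma sum_negMulLog_le_aux {ι : Type*} (s : Finset ι) (p : ι → ℝ)
    (hp : ∀ l ∈ s, 0 ≤ p l) :
    ∑ l ∈ s, Real.negMulLog (p l) ≤
      Real.negMulLog (∑ l ∈ s, p l) + (∑ l ∈ s, p l) * Real.log s.card := by
  rcases s.eq_empty_or_nonempty with rfl | hs
  · simp
  have hn : (0:ℝ) < s.card := by exact_mod_cast Finset.card_pos.mpr hs
  set q : ℝ := ∑ l ∈ s, p l with hq
  have hq0 : 0 ≤ q := Finset.sum_nonneg hp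
  rcases eq_or_lt_of_le hq0 with hq0' | hqpos
  · have : ∀ l ∈ s, p l = 0 :=
      (Finset.sum_eq_zero_iff_of_nonneg hp).mp hq0'.symm
    rw [← hq0', Finset.sum_congr rfl (fun l hl => by rw [this l hl, Real.negMulLog_zero])]
    simp
  · have jensen := Real.concaveOn_negMulLog.le_map_sum (t := s) (w := fun _ => (s.card : ℝ)⁻¹)
      (p := p) (fun i _ => by positivity)
      (by rw [Finset.sum_const, nsmul_eq_mul, mul_inv_cancel₀ hn.ne'])
      (fun i hi => hp i hi)
    simp only [smul_eq_mul, ← Finset.mul_sum] at jensen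
    have h2 : (s.card : ℝ) * ((s.card : ℝ)⁻¹ * ∑ l ∈ s, Real.negMulLog (p l))
        ≤ (s.card : ℝ) * Real.negMulLog ((s.card : ℝ)⁻¹ * q) :=
      mul_le_mul_of_nonneg_left jensen hn.le
    rw [← mul_assoc, mul_inv_cancel₀ hn.ne', one_mul] at h2
    refine h2.trans_eq ?_
    rw [Real.negMulLog, Real.log_mul (by positivity) hqpos.ne', Real.log_inv]
    unfold Real.negMulLog
    field_simp
    ring

lemma concaveOn_binEnt : ConcaveOn ℝ (Set.Icc (0:ℝ) 1)
    (fun t => Real.negMulLog t + Real.negMulLog (1 - t)) := by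
  have h1 : ConcaveOn ℝ (Set.Icc (0:ℝ) 1) Real.negMulLog :=
    Real.concaveOn_negMulLog.subset (fun x hx => hx.1) (convex_Icc 0 1)
  have h2 : ConcaveOn ℝ (Set.Icc (0:ℝ) 1) (fun t => Real.negMulLog (1 - t)) := by
    refine ⟨convex_Icc 0 1, ?_⟩
    intro x hx y hy a b ha hb hab
    have key := Real.concaveOn_negMulLog.2 (x := 1 - x) (y := 1 - y)
      (by simp only [Set.mem_Ici]; linarith [hx.2]) (by simp only [Set.mem_Ici]; linarith [hy.2])
      ha hb hab
    simp only [smul_eq_mul] at key ⊢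
    have e : a * (1 - x) + b * (1 - y) = 1 - (a * x + b * y) := by linear_combination hab
    rw [e] at key
    exact key
  exact h1.add h2

lemma binEnt_decomp (P q : ℝ) (hq : 0 ≤ q) (hP : q ≤ P) :
    Real.negMulLog q + Real.negMulLog (P - q) - Real.negMulLog P
      = P * (Real.negMulLog (if P = 0 then 0 else q / P)
        + Real.negMulLog (1 - (if P = 0 then 0 else q / P))) := by
  by_cases hP0 : P = 0
  · have : q = 0 := le_antisymm (hP0 ▸ hP) hq
    simp [hP0, this]
  · rw [if_neg hP0]
    have e1 : q = P * (q / P) := by field_simp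
    have e2 : P - q = P * (1 - q / P) := by field_simp
    calc Real.negMulLog q + Real.negMulLog (P - q) - Real.negMulLog P
        = Real.negMulLog (P * (q / P)) + Real.negMulLog (P * (1 - q / P)) - Real.negMulLog P := by
          rw [← e1, ← e2]
      _ = _ := by
          rw [Real.negMulLog_mul, Real.negMulLog_mul]
          ring

/-- Given a factor map `π : (X,T) → (Y,S)`, `μ ∈ M(X,T)`, a finite Borel
partition `α = {A_1,…,A_k}` of `Y` and `ε > 0`, there is an open cover `𝒰` of `Y` with `k`
elements such that `H_μ(T^{-j}π^{-1}α | β) < ε` for every `j ≥ 0` and every finite Borel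
partition `β` of `X` refining `T^{-j}π^{-1}𝒰`. -/
theorem factor_partition_cover_conditional_entropy
    (X Y : Type) [MetricSpace X] [CompactSpace X] [MetricSpace Y] [CompactSpace Y]
    [MeasurableSpace X] [BorelSpace X] [MeasurableSpace Y] [BorelSpace Y]
    (T : X → X) (hT : Continuous T) (S : Y → Y) (hS : Continuous S)
    (π : X → Y) (hπc : Continuous π) (hπs : Function.Surjective π) (hπe : π ∘ T = S ∘ π)
    (μ : Measure X) [IsProbabilityMeasure μ] (hμ : μ.map T = μ)
    (m : ℕ) (α : Fin m → Set Y) (hα : IsPart α) (ε : ℝ) (hε : 0 < ε) :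
    ∃ U : Fin m → Set Y, (∀ i, IsOpen (U i)) ∧ (⋃ i, U i) = Set.univ ∧
      ∀ (j : ℕ) (d : ℕ) (β : Fin d → Set X), IsPart β →
        (∀ b : Fin d, ∃ i : Fin m, β b ⊆ T^[j] ⁻¹' (π ⁻¹' U i)) →
        condEnt μ (fun i : Fin m => T^[j] ⁻¹' (π ⁻¹' α i)) β < ε := by
  classical
  obtain ⟨hαmeas, hαdisj, hαunion⟩ := hα
  -- invariance of μ under T^[j]
  have hinv : ∀ (j : ℕ) ⦃E : Set X⦄, MeasurableSet E → μ (T^[j] ⁻¹' E) = μ E := by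
    intro j
    induction j with
    | zero => intro E _; simp
    | succ j ih =>
      intro E hE
      have hF : MeasurableSet (T^[j] ⁻¹' E) := (hT.measurable.iterate j) hE
      rw [Function.iterate_succ, Set.preimage_comp,
        ← Measure.map_apply hT.measurable hF, hμ, ih hE]
  -- choose δ0 by continuity
  set F : ℝ → ℝ := fun t => Real.negMulLog t + Real.negMulLog (1 - t) + t * Real.log m with hF
  have hFc : ContinuousAt F 0 := by fun_prop
  obtain ⟨δ0, hδ0, hδ0'⟩ := Metric.continuousAt_iff.mp hFc ε hε
  set δ : ℝ := δ0 / (m + 1) with hδdef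
  have hδpos : 0 < δ := by positivity
  -- pushforward measure and outer regularity
  set ν : Measure Y := μ.map π with hν
  haveI : IsProbabilityMeasure ν := Measure.isProbabilityMeasure_map hπc.measurable.aemeasurable
  have hexU : ∀ i : Fin m, ∃ U, α i ⊆ U ∧ IsOpen U ∧ ν U < ν (α i) + ENNReal.ofReal δ :=
    fun i => Set.exists_isOpen_lt_add (α i) (measure_ne_top ν _)
      (by simp [ENNReal.ofReal_eq_zero, not_le, hδpos])
  choose U hUsub hUopen hUlt using hexU
  have hDlt : ∀ (j : ℕ) (i : Fin m),
      μ (T^[j] ⁻¹' (π ⁻¹' (U i \ α i))) < ENNReal.ofReal δ := by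
    intro j i
    have hmeas : MeasurableSet (U i \ α i) := (hUopen i).measurableSet.diff (hαmeas i)
    rw [hinv j (hmeas.preimage hπc.measurable), ← Measure.map_apply hπc.measurable hmeas, ← hν]
    exact measure_diff_lt_of_lt_add (hαmeas i).nullMeasurableSet (hUsub i)
      (measure_ne_top ν _) (hUlt i)
  refine ⟨U, hUopen, ?_, ?_⟩
  · refine Set.eq_univ_of_univ_subset ?_
    rw [← hαunion]
    exact Set.iUnion_mono hUsub
  intro j d β hβ hre
  obtain ⟨hβmeas, hβdisj, hβunion⟩ := hβ
  choose I hI using hre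
  set γ : Fin m → Set X := fun i => T^[j] ⁻¹' (π ⁻¹' α i) with hγ
  have hγmeas : ∀ i, MeasurableSet (γ i) :=
    fun i => ((hαmeas i).preimage hπc.measurable).preimage (hT.measurable.iterate j)
  have hγdisj : ∀ i i', i ≠ i' → Disjoint (γ i) (γ i') := fun i i' h =>
    ((hαdisj i i' h).preimage π).preimage (T^[j])
  have hγunion : ⋃ i, γ i = Set.univ := by
    simp only [hγ, ← Set.preimage_iUnion, hαunion, Set.preimage_univ]
  set p : Fin m → Fin d → ℝ := fun l b => (μ (γ l ∩ β b)).toReal with hp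
  set P : Fin d → ℝ := fun b => (μ (β b)).toReal with hP
  have hpnn : ∀ l b, 0 ≤ p l b := fun l b => ENNReal.toReal_nonneg
  have hPnn : ∀ b, 0 ≤ P b := fun b => ENNReal.toReal_nonneg
  have hPsum : ∀ b, P b = ∑ l, p l b := by
    intro b
    have hu : ⋃ l, (γ l ∩ β b) = β b := by
      rw [← Set.iUnion_inter, hγunion, Set.univ_inter]
    have hmi := measure_iUnion (μ := μ) (f := fun l => γ l ∩ β b)
      (fun l l' h => ((hγdisj l l' h).mono inter_subset_left inter_subset_left))
      (fun l => (hγmeas l).inter (hβmeas b))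
    rw [hu, tsum_fintype] at hmi
    show (μ (β b)).toReal = _
    rw [hmi, ENNReal.toReal_sum (fun l _ => measure_ne_top μ _)]
  have hPtot : ∑ b, P b = 1 := by
    have hmi := measure_iUnion (μ := μ) (f := β) (fun b b' h => hβdisj b b' h) hβmeas
    rw [hβunion, measure_univ, tsum_fintype] at hmi
    calc ∑ b, P b = (∑ b, μ (β b)).toReal :=
          (ENNReal.toReal_sum (fun b _ => measure_ne_top μ _)).symm
      _ = 1 := by rw [← hmi]; simp
  set q : Fin d → ℝ := fun b => ∑ l ∈ Finset.univ.erase (I b), p l b with hqdef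
  have hq_eq : ∀ b, p (I b) b + q b = P b := by
    intro b
    rw [hPsum b]
    simp only [hqdef]
    exact Finset.add_sum_erase Finset.univ (fun l => p l b) (Finset.mem_univ (I b))
  have hqnn : ∀ b, 0 ≤ q b := fun b => Finset.sum_nonneg (fun l _ => hpnn l b)
  have hqle : ∀ b, q b ≤ P b := fun b => by
    have := hq_eq b; have := hpnn (I b) b; linarith
  -- mismatch bound
  set D : Fin m → Set X := fun i => T^[j] ⁻¹' (π ⁻¹' (U i \ α i)) with hD
  have hQsum : ∑ b, ∑ l ∈ Finset.univ.erase (I b), μ (γ l ∩ β b)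
      ≤ (m : ℝ≥0∞) * ENNReal.ofReal δ := by
    have step1 : ∀ b, ∑ l ∈ Finset.univ.erase (I b), μ (γ l ∩ β b)
        ≤ μ (β b ∩ ⋃ i, D i) := by
      intro b
      rw [← measure_biUnion_finset (fun l _ l' _ h =>
          ((hγdisj l l' h).mono inter_subset_left inter_subset_left))
        (fun l _ => (hγmeas l).inter (hβmeas b))]
      apply measure_mono
      rintro x hx
      simp only [Set.mem_iUnion] at hx
      obtain ⟨l, hl, hxl⟩ := hx
      have hlne : l ≠ I b := (Finset.mem_erase.mp hl).1
      refine ⟨hxl.2, Set.mem_iUnion.mpr ⟨I b, ?_⟩⟩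
      have hxW : x ∈ T^[j] ⁻¹' (π ⁻¹' U (I b)) := hI b hxl.2
      have hxnγ : x ∉ γ (I b) := Set.disjoint_left.mp (hγdisj l (I b) hlne) hxl.1
      exact ⟨hxW, hxnγ⟩
    calc ∑ b, ∑ l ∈ Finset.univ.erase (I b), μ (γ l ∩ β b)
        ≤ ∑ b, μ (β b ∩ ⋃ i, D i) := Finset.sum_le_sum (fun b _ => step1 b)
      _ = μ (⋃ b, (β b ∩ ⋃ i, D i)) := by
          rw [measure_iUnion (fun b b' h =>
            ((hβdisj b b' h).mono inter_subset_left inter_subset_left))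
            (fun b => (hβmeas b).inter
              (MeasurableSet.iUnion (fun i => ((hUopen i).measurableSet.diff
                (hαmeas i)).preimage hπc.measurable |>.preimage (hT.measurable.iterate j)))),
            tsum_fintype]
      _ ≤ μ (⋃ i, D i) := measure_mono (Set.iUnion_subset (fun b => Set.inter_subset_right))
      _ ≤ ∑ i, μ (D i) := measure_iUnion_fintype_le μ D
      _ ≤ ∑ _i : Fin m, ENNReal.ofReal δ := Finset.sum_le_sum (fun i _ => (hDlt j i).le)
      _ = (m : ℝ≥0∞) * ENNReal.ofReal δ := by
          rw [Finset.sum_const, Finset.card_univ, Fintype.card_fin, nsmul_eq_mul]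
  set Q : ℝ := ∑ b, q b with hQdef
  have hQnn : 0 ≤ Q := Finset.sum_nonneg (fun b _ => hqnn b)
  have hQlt : Q < δ0 := by
    have h1 : Q = (∑ b, ∑ l ∈ Finset.univ.erase (I b), μ (γ l ∩ β b)).toReal := by
      rw [ENNReal.toReal_sum (fun b _ => by
        exact (ENNReal.sum_lt_top.mpr (fun l _ => (measure_ne_top μ _).lt_top)).ne)]
      exact Finset.sum_congr rfl (fun b _ =>
        (ENNReal.toReal_sum (fun l _ => measure_ne_top μ _)).symm)
    have h2 : Q ≤ (m : ℝ) * δ := by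
      rw [h1]
      calc (∑ b, ∑ l ∈ Finset.univ.erase (I b), μ (γ l ∩ β b)).toReal
          ≤ ((m : ℝ≥0∞) * ENNReal.ofReal δ).toReal :=
            ENNReal.toReal_mono (by
              exact (ENNReal.mul_lt_top (by simp) ENNReal.ofReal_lt_top).ne) hQsum
        _ = (m : ℝ) * δ := by
            rw [ENNReal.toReal_mul, ENNReal.toReal_ofReal hδpos.le]
            simp
    have hm1 : (0:ℝ) < (m : ℝ) + 1 := by positivity
    calc Q ≤ (m : ℝ) * δ := h2
      _ = ((m : ℝ) * δ0) / ((m : ℝ) + 1) := by rw [hδdef]; ring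
      _ < δ0 := by rw [div_lt_iff₀ hm1]; nlinarith
  -- entropy estimates
  have step1 : ∀ b, ∑ l, Real.negMulLog (p l b)
      ≤ Real.negMulLog (P b - q b) + (Real.negMulLog (q b) + q b * Real.log m) := by
    intro b
    have hm : 0 < m := (I b).pos
    have hsplit : ∑ l, Real.negMulLog (p l b)
        = Real.negMulLog (p (I b) b) + ∑ l ∈ Finset.univ.erase (I b), Real.negMulLog (p l b) :=
      (Finset.add_sum_erase _ _ (Finset.mem_univ _)).symm
    have hA := sum_negMulLog_le_aux (Finset.univ.erase (I b)) (fun l => p l b)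
      (fun l _ => hpnn l b)
    have hlog : Real.log ((Finset.univ.erase (I b)).card : ℝ) ≤ Real.log m := by
      rcases Nat.eq_zero_or_pos (Finset.univ.erase (I b)).card with h0 | hpos
      · rw [h0]
        simpa using Real.log_nonneg (by exact_mod_cast hm)
      · apply Real.log_le_log (by exact_mod_cast hpos)
        have hle : (Finset.univ.erase (I b)).card ≤ m := by
          calc (Finset.univ.erase (I b)).card ≤ (Finset.univ : Finset (Fin m)).card :=
              Finset.card_le_card (Finset.erase_subset _ _)
            _ = m := by rw [Finset.card_univ, Fintype.card_fin]
        exact_mod_cast hle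
    have hpe : p (I b) b = P b - q b := by have := hq_eq b; linarith
    rw [hsplit, hpe]
    have hq' : ∑ l ∈ Finset.univ.erase (I b), p l b = q b := rfl
    calc Real.negMulLog (P b - q b) + ∑ l ∈ Finset.univ.erase (I b), Real.negMulLog (p l b)
        ≤ Real.negMulLog (P b - q b) + (Real.negMulLog (q b)
            + q b * Real.log ((Finset.univ.erase (I b)).card : ℝ)) := by
          rw [hq'] at hA
          linarith
      _ ≤ _ := by
          have := mul_le_mul_of_nonneg_left hlog (hqnn b)
          linarith
  have step2 : ∑ b, (Real.negMulLog (q b) + Real.negMulLog (P b - q b) - Real.negMulLog (P b))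
      ≤ Real.negMulLog Q + Real.negMulLog (1 - Q) := by
    set t : Fin d → ℝ := fun b => if P b = 0 then 0 else q b / P b with ht
    have htmem : ∀ b, t b ∈ Set.Icc (0:ℝ) 1 := by
      intro b
      by_cases h : P b = 0
      · simp [ht, h]
      · have hPpos : 0 < P b := lt_of_le_of_ne (hPnn b) (Ne.symm h)
        simp only [ht, if_neg h]
        exact ⟨div_nonneg (hqnn b) (hPnn b), (div_le_one hPpos).mpr (hqle b)⟩
    have hPt : ∀ b, P b * t b = q b := by
      intro b
      by_cases h : P b = 0
      · have hq0 : q b = 0 := le_antisymm (h ▸ hqle b) (hqnn b)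
        simp [ht, h, hq0]
      · simp only [ht, if_neg h]
        field_simp
    have jensen := concaveOn_binEnt.le_map_sum (t := Finset.univ) (w := P) (p := t)
      (fun b _ => hPnn b) hPtot (fun b _ => htmem b)
    simp only [smul_eq_mul] at jensen
    have hQt : ∑ b, P b * t b = Q := Finset.sum_congr rfl (fun b _ => hPt b)
    rw [hQt] at jensen
    have hsum_eq : ∑ b, (Real.negMulLog (q b) + Real.negMulLog (P b - q b) - Real.negMulLog (P b))
        = ∑ b, P b * (Real.negMulLog (t b) + Real.negMulLog (1 - t b)) := by
      refine Finset.sum_congr rfl (fun b _ => ?_)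
      simp only [ht]
      exact binEnt_decomp (P b) (q b) (hqnn b) (hqle b)
    rw [hsum_eq]
    exact jensen
  have hcond : condEnt μ γ β
      = ∑ b, (∑ l, Real.negMulLog (p l b)) - ∑ b, Real.negMulLog (P b) := by
    unfold condEnt entH
    rw [Fintype.sum_prod_type, Finset.sum_comm]
  calc condEnt μ γ β = ∑ b, (∑ l, Real.negMulLog (p l b)) - ∑ b, Real.negMulLog (P b) := hcond
    _ ≤ ∑ b, (Real.negMulLog (P b - q b) + (Real.negMulLog (q b) + q b * Real.log m))
          - ∑ b, Real.negMulLog (P b) :=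
        sub_le_sub_right (Finset.sum_le_sum (fun b _ => step1 b)) _
    _ = (∑ b, (Real.negMulLog (q b) + Real.negMulLog (P b - q b) - Real.negMulLog (P b)))
          + Q * Real.log m := by
        rw [hQdef, Finset.sum_mul, ← Finset.sum_sub_distrib, ← Finset.sum_add_distrib]
        exact Finset.sum_congr rfl (fun b _ => by ring)
    _ ≤ (Real.negMulLog Q + Real.negMulLog (1 - Q)) + Q * Real.log m := by linarith [step2]
    _ = F Q := by simp only [hF]
    _ < ε := by
        have hd := hδ0' (x := Q)
          (by rw [Real.dist_eq, sub_zero, abs_of_nonneg hQnn]; exact hQlt)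
        have hF0 : F 0 = 0 := by simp [hF]
        rw [Real.dist_eq, hF0, sub_zero] at hd
        exact lt_of_le_of_lt (le_abs_self _) hd


end WTP
end
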